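/- arXiv:1806.04837 — 3 statements merged into one kernel-verified Lean document; each statement's English description precedes it below -/
import Mathlib

section
/- For every q ∈ ℂ with |q| < 1 and all w, w' ∈ Ĥ⁰, one has Z_q(w *_q w') = Z_q(w) · Z_q(w'). (In particular Ĥ⁰ is closed under the stuffle product *_q.) -/
noncomputable section

/-- The coefficient ring `𝒞 = ℚ[ℏ, ℏ⁻¹]`, realized as Laurent polynomials over `ℚ`. -/
abbrev CC : Type := LaurentPolynomial ℚ

/-- The variable `ℏ ∈ 𝒞`. -/
def hb : CC := LaurentPolynomial.T 1

/-- Embedding of rational constants into `𝒞`. -/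
def qs (x : ℚ) : CC := algebraMap ℚ CC x

/-- The non-commutative polynomial ring `H = 𝒞⟨a, b⟩`. -/
abbrev H : Type := FreeAlgebra CC (Fin 2)

/-- The generator `a`. -/
def av : H := FreeAlgebra.ι CC 0

/-- The generator `b`. -/
def bv : H := FreeAlgebra.ι CC 1

/-- `e k` for `k : ℕ`:  `e 0 = e_{1̄} = ab`, and `e (k+1) = e_{k+1} = a^k (a+ℏ) b`. -/
def ev : ℕ → H
  | 0 => av * bv
  | (k+1) => av ^ k * (av + algebraMap CC H hb) * bv

/-- The monomial `e_{k_1} ⋯ e_{k_r}` attached to an index (a list over `N̂`,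
with `0` encoding `1̄` and `k+1` encoding the positive integer `k+1`). -/
def eword (l : List ℕ) : H := (l.map ev).prod

/-- `Ĥ¹`, as the `𝒞`-span of all monomials `e_k` (this coincides with the subalgebra
freely generated by the `e_k`). -/
def H1 : Submodule CC H := Submodule.span CC {x : H | ∃ l : List ℕ, x = eword l}

/-- `Ĥ⁰`, the `𝒞`-span of monomials `e_k` with `k ∈ Î₀` (first entry `≠ 1`). -/
def H0 : Submodule CC H := Submodule.span CC
  {x : H | ∃ l : List ℕ, l.head? ≠ some 1 ∧ x = eword l}

/-- The circle product `∘_q` on the generators. -/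
def circ : ℕ → ℕ → H
  | 0, 0 => ev 2 - hb • ev 0
  | 0, (l+1) => ev (l+2)
  | (k+1), 0 => ev (k+2)
  | (k+1), (l+1) => ev (k+l+2) + hb • ev (k+l+1)

/-- The defining properties of the shuffle product `⧢_q` on `H`. -/
def IsShuffle (sh : H →ₗ[CC] H →ₗ[CC] H) : Prop :=
  (∀ w : H, sh 1 w = w) ∧ (∀ w : H, sh w 1 = w) ∧
  (∀ w w' : H, sh (av * w) (av * w') =
      av * (sh (av * w) w' + sh w (av * w') + hb • sh w w')) ∧
  (∀ w w' : H, sh (bv * w) w' = bv * sh w w') ∧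
  (∀ w w' : H, sh w (bv * w') = bv * sh w w')

/-- The defining properties of the stuffle product `*_q` on `Ĥ¹`. -/
def IsStuffle (st : H →ₗ[CC] H →ₗ[CC] H) : Prop :=
  (∀ w : H, st 1 w = w) ∧ (∀ w : H, st w 1 = w) ∧
  (∀ k l : ℕ, ∀ w w' : H, w ∈ H1 → w' ∈ H1 →
    st (ev k * w) (ev l * w') =
      ev k * st w (ev l * w') + ev l * st (ev k * w) w' + circ k l * st w w')

/-- The q-integer `[m] = (1-q^m)/(1-q)`. -/
def qint (q : ℂ) (m : ℕ) : ℂ := (1 - q ^ m) / (1 - q)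

/-- `F_k(m)`:  `F 0 = F_{1̄}` and `F (k+1) = F_{k+1}`. -/
def Fq (q : ℂ) : ℕ → ℕ → ℂ
  | 0, m => q ^ m / qint q m
  | (k+1), m => q ^ (k * m) / (qint q m) ^ (k + 1)

/-- `ζ_q(k)` for an index `k` (a list over `N̂`): the sum over `m_1 > ⋯ > m_r ≥ 1`. -/
def zetaq (q : ℂ) (l : List ℕ) : ℂ :=
  ∑' m : {f : Fin l.length → ℕ // StrictAnti f ∧ ∀ i, 0 < f i},
    ∏ i : Fin l.length, Fq q (l.get i) (m.1 i)

/-- The defining properties of the `𝒞`-linear map `Z_q` (as a map on all of `H`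
extending the one on `Ĥ⁰`): additive, `𝒞`-semilinear along `ρ`, sending `e_k ↦ ζ_q(k)`
for `k ∈ Î₀`. -/
def IsZq (ρ : CC →ₐ[ℚ] ℂ) (q : ℂ) (Z : H →+ ℂ) : Prop :=
  (∀ c : CC, ∀ w : H, Z (c • w) = ρ c * Z w) ∧
  (∀ l : List ℕ, l.head? ≠ some 1 → Z (eword l) = zetaq q l)


/-- The complex absolute value, as an absolute value. -/
abbrev Complex.abs : AbsoluteValue ℂ ℝ := NormedField.toAbsoluteValue ℂ

-- ### auxiliary development

def circPairs : ℕ → ℕ → List (CC × ℕ)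
  | 0, 0 => [(1, 2), (-hb, 0)]
  | 0, (l+1) => [(1, l+2)]
  | (k+1), 0 => [(1, k+2)]
  | (k+1), (l+1) => [(1, k+l+2), (hb, k+l+1)]

lemma circ_eq (k l : ℕ) :
    circ k l = ((circPairs k l).map fun p => p.1 • ev p.2).sum := by
  rcases k with _ | k <;> rcases l with _ | l <;>
    simp [circ, circPairs, sub_eq_add_neg, neg_smul] <;> exact (neg_smul hb (ev 0)).symm

def Stf : List ℕ → List ℕ → List (CC × List ℕ)
  | [], v => [(1, v)]
  | (k::u), [] => [(1, k::u)]
  | (k::u), (l::v) =>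
      ((Stf u (l::v)).map fun p => (p.1, k::p.2)) ++
      ((Stf (k::u) v).map fun p => (p.1, l::p.2)) ++
      ((circPairs k l).flatMap fun ch => (Stf u v).map fun p => (ch.1*p.1, ch.2::p.2))

def toH (p : List (CC × List ℕ)) : H := (p.map fun cw => cw.1 • eword cw.2).sum

lemma eword_nil : eword [] = 1 := rfl
lemma eword_cons (k : ℕ) (u : List ℕ) : eword (k::u) = ev k * eword u := by
  simp [eword]
lemma eword_mem_H1 (u : List ℕ) : eword u ∈ H1 :=
  Submodule.subset_span ⟨u, rfl⟩

lemma toH_append (p q : List (CC × List ℕ)) : toH (p ++ q) = toH p + toH q := by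
  simp [toH]
lemma toH_consmap (k : ℕ) (p : List (CC × List ℕ)) :
    toH (p.map fun cw => (cw.1, k::cw.2)) = ev k * toH p := by
  induction p with
  | nil => simp [toH]
  | cons a p ih =>
      simp only [List.map_cons, toH, List.map_map, List.sum_cons] at *
      rw [mul_add, ← ih, eword_cons, mul_smul_comm]
lemma toH_smulmap (c : CC) (p : List (CC × List ℕ)) :
    toH (p.map fun cw => (c * cw.1, cw.2)) = c • toH p := by
  induction p with
  | nil => simp [toH]
  | cons a p ih =>
      simp only [List.map_cons, toH, List.map_map, List.sum_cons] at *
      rw [smul_add, ← ih, mul_smul]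

lemma toH_circTerm (k l : ℕ) (p : List (CC × List ℕ)) :
    toH ((circPairs k l).flatMap fun ch => p.map fun cw => (ch.1*cw.1, ch.2::cw.2))
      = circ k l * toH p := by
  rw [circ_eq]
  induction circPairs k l with
  | nil => simp [toH]
  | cons a cp ih =>
      simp only [List.flatMap_cons, List.map_cons, List.sum_cons, toH_append, add_mul, ← ih]
      congr 1
      have : (p.map fun cw => (a.1 * cw.1, a.2 :: cw.2))
          = ((p.map fun cw => (cw.1, a.2::cw.2)).map fun cw => (a.1 * cw.1, cw.2)) := by
        simp [List.map_map, Function.comp]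
      rw [this, toH_smulmap, toH_consmap, smul_mul_assoc]

lemma st_eword (st : H →ₗ[CC] H →ₗ[CC] H) (hst : IsStuffle st) :
    ∀ u v : List ℕ, st (eword u) (eword v) = toH (Stf u v) := by
  intro u v
  induction u, v using Stf.induct with
  | case1 v => simp [Stf, toH, eword_nil, hst.1]
  | case2 k u => simp [Stf, toH, eword_nil, hst.2.1]
  | case3 k u l v ih1 ih2 ih3 =>
      rw [eword_cons, eword_cons,
        hst.2.2 k l (eword u) (eword v) (eword_mem_H1 u) (eword_mem_H1 v),
        ← eword_cons, ← eword_cons, ih1, ih2, ih3]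
      rw [Stf, toH_append, toH_append, toH_consmap, toH_consmap, toH_circTerm]

-- ### admissibility of stuffle words
lemma circPairs_head_ne_one {k l : ℕ} (hk : k ≠ 1) (hl : l ≠ 1) :
    ∀ ch ∈ circPairs k l, ch.2 ≠ 1 := by
  rcases k with _ | k <;> rcases l with _ | l <;> simp_all [circPairs] <;> omega

lemma Stf_admissible {u v : List ℕ} (hu : u.head? ≠ some 1) (hv : v.head? ≠ some 1) :
    ∀ cw ∈ Stf u v, cw.2.head? ≠ some 1 := by
  match u, v with
  | [], v => intro cw h; simp [Stf] at h; rw [h]; exact hv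
  | (k::u), [] => intro cw h; simp [Stf] at h; rw [h]; exact hu
  | (k::u), (l::v) =>
      intro cw h
      simp only [List.head?_cons, ne_eq, Option.some.injEq] at hu hv
      simp only [Stf, List.mem_append, List.mem_map, List.mem_flatMap] at h
      rcases h with (⟨p, _, rfl⟩ | ⟨p, _, rfl⟩) | ⟨ch, hch, p, _, rfl⟩
      · simpa using hu
      · simpa using hv
      · have := circPairs_head_ne_one (k := k) (l := l) (by simpa using hu)
          (by simpa using hv) ch hch
        simpa using this

lemma toH_mem_H0 (p : List (CC × List ℕ)) (hp : ∀ cw ∈ p, cw.2.head? ≠ some 1) :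
    toH p ∈ H0 := by
  induction p with
  | nil => simp [toH]
  | cons a p ih =>
      simp only [toH, List.map_cons, List.sum_cons]
      refine Submodule.add_mem _ (Submodule.smul_mem _ _ (Submodule.subset_span ?_))
        (ih fun cw h => hp cw (List.mem_cons_of_mem _ h))
      exact ⟨a.2, hp a (List.mem_cons_self), rfl⟩

-- ### truncated sums
def Atr {R : Type*} [CommSemiring R] (φ : ℕ → ℕ → R) : List ℕ → ℕ → R
  | [], _ => 1
  | (k::u), N => ∑ m ∈ Finset.Ico 1 N, φ k m * Atr φ u m

-- key double-sum split
lemma sum_mul_sum_split {f g : ℕ → ℂ} (N : ℕ) :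
    (∑ m ∈ Finset.Ico 1 N, f m) * (∑ n ∈ Finset.Ico 1 N, g n) =
      (∑ m ∈ Finset.Ico 1 N, f m * ∑ n ∈ Finset.Ico 1 m, g n) +
      (∑ n ∈ Finset.Ico 1 N, g n * ∑ m ∈ Finset.Ico 1 n, f m) +
      (∑ m ∈ Finset.Ico 1 N, f m * g m) := by
  induction N with
  | zero => simp
  | succ N ih =>
      rcases Nat.lt_or_ge N 1 with hN | hN
      · interval_cases N <;> simp
      · rw [Finset.sum_Ico_succ_top hN, Finset.sum_Ico_succ_top hN,
          Finset.sum_Ico_succ_top hN (f := fun m => f m * ∑ n ∈ Finset.Ico 1 m, g n),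
          Finset.sum_Ico_succ_top hN (f := fun n => g n * ∑ m ∈ Finset.Ico 1 n, f m),
          Finset.sum_Ico_succ_top hN (f := fun m => f m * g m)]
        ring_nf
        rw [ih]
        ring

section Analytic
variable {q : ℂ} {ρ : CC →ₐ[ℚ] ℂ}

lemma one_sub_ne_zero (hq : Complex.abs q < 1) : (1 : ℂ) - q ≠ 0 := by
  intro h
  have : q = 1 := by linear_combination -h
  rw [this] at hq; simp at hq

lemma one_sub_pow_ne_zero (hq : Complex.abs q < 1) {m : ℕ} (hm : 1 ≤ m) :
    (1 : ℂ) - q ^ m ≠ 0 := by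
  intro h
  have h1 : Complex.abs (q ^ m) < 1 := by
    rw [map_pow]
    exact pow_lt_one₀ (Complex.abs.nonneg q) hq (by omega)
  have : q ^ m = 1 := by linear_combination -h
  rw [this] at h1; simp at h1

lemma qint_ne_zero (hq : Complex.abs q < 1) {m : ℕ} (hm : 1 ≤ m) : qint q m ≠ 0 :=
  div_ne_zero (one_sub_pow_ne_zero hq hm) (one_sub_ne_zero hq)

lemma Fq_mul_Fq (hq : Complex.abs q < 1) (hρ : ρ hb = 1 - q) (k l m : ℕ) (hm : 1 ≤ m) :
    Fq q k m * Fq q l m = ((circPairs k l).map fun ch => ρ ch.1 * Fq q ch.2 m).sum := by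
  have h1 : (1 : ℂ) - q ≠ 0 := one_sub_ne_zero hq
  have h2 : (1 : ℂ) - q ^ m ≠ 0 := one_sub_pow_ne_zero hq hm
  rcases k with _ | k <;> rcases l with _ | l <;>
    simp only [circPairs, Fq, List.map_cons, List.map_nil, List.sum_cons, List.sum_nil,
      map_one, map_neg, hρ, one_mul, add_zero, qint, div_pow]
  · field_simp
    ring
  · rw [show (l+1)*m = l*m + m by ring, pow_add]
    field_simp
    ring
  · rw [show (k+1)*m = k*m + m by ring, pow_add]
    field_simp
    ring
  · rw [show (k+l+1)*m = k*m + l*m + m from by ring, show (k+l)*m = k*m + l*m from by ring,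
      pow_add, pow_add]
    field_simp
    ring
end Analytic

-- ### evaluation of formal combinations on truncated sums
def toA (q : ℂ) (ρ : CC →ₐ[ℚ] ℂ) (p : List (CC × List ℕ)) (N : ℕ) : ℂ :=
  (p.map fun cw => ρ cw.1 * Atr (Fq q) cw.2 N).sum

section ToA
variable {q : ℂ} {ρ : CC →ₐ[ℚ] ℂ}

lemma Atr_cons {R : Type*} [CommSemiring R] (φ : ℕ → ℕ → R) (k : ℕ) (u : List ℕ) (N : ℕ) :
    Atr φ (k::u) N = ∑ m ∈ Finset.Ico 1 N, φ k m * Atr φ u m := rfl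

lemma toA_append (p r : List (CC × List ℕ)) (N : ℕ) :
    toA q ρ (p ++ r) N = toA q ρ p N + toA q ρ r N := by simp [toA]

lemma toA_consmap (k : ℕ) (p : List (CC × List ℕ)) (N : ℕ) :
    toA q ρ (p.map fun cw => (cw.1, k::cw.2)) N
      = ∑ m ∈ Finset.Ico 1 N, Fq q k m * toA q ρ p m := by
  induction p with
  | nil => simp [toA]
  | cons a p ih =>
      simp only [List.map_cons, toA, List.map_map, List.sum_cons, Function.comp] at *
      rw [ih, Atr_cons, Finset.mul_sum, ← Finset.sum_add_distrib]
      congr 1; ext m; ring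

lemma toA_smulmap (c : CC) (p : List (CC × List ℕ)) (N : ℕ) :
    toA q ρ (p.map fun cw => (c * cw.1, cw.2)) N = ρ c * toA q ρ p N := by
  induction p with
  | nil => simp [toA]
  | cons a p ih =>
      simp only [List.map_cons, toA, List.map_map, List.sum_cons, Function.comp] at *
      rw [ih, map_mul]; ring

lemma listsum_finsetsum_swap {α : Type*} (cp : List α) (g : α → ℕ → ℂ) (s : Finset ℕ) :
    ∑ m ∈ s, (cp.map (g · m)).sum = (cp.map fun a => ∑ m ∈ s, g a m).sum := by
  induction cp with
  | nil => simp
  | cons a cp ih => simp [Finset.sum_add_distrib, ih]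

set_option maxHeartbeats 1000000 in
lemma toA_circTerm (hq : Complex.abs q < 1) (hρ : ρ hb = 1 - q)
    (k l : ℕ) (p : List (CC × List ℕ)) (N : ℕ) :
    toA q ρ ((circPairs k l).flatMap fun ch => p.map fun cw => (ch.1*cw.1, ch.2::cw.2)) N
      = ∑ m ∈ Finset.Ico 1 N, (Fq q k m * Fq q l m) * toA q ρ p m := by
  have step : ∀ cp : List (CC × ℕ),
      toA q ρ (cp.flatMap fun ch => p.map fun cw => (ch.1*cw.1, ch.2::cw.2)) N
        = (cp.map fun ch => ρ ch.1 * ∑ m ∈ Finset.Ico 1 N, Fq q ch.2 m * toA q ρ p m).sum := by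
    intro cp
    induction cp with
    | nil => simp [toA]
    | cons a cp ih =>
        rw [List.flatMap_cons, toA_append, ih, List.map_cons, List.sum_cons]
        congr 1
        have : (p.map fun cw => (a.1 * cw.1, a.2 :: cw.2))
            = ((p.map fun cw => (cw.1, a.2::cw.2)).map fun cw => (a.1 * cw.1, cw.2)) := by
          simp [List.map_map, Function.comp]
        rw [this, toA_smulmap, toA_consmap]
  rw [step]
  have swap := listsum_finsetsum_swap (circPairs k l)
      (fun ch m => ρ ch.1 * (Fq q ch.2 m * toA q ρ p m)) (Finset.Ico 1 N)
  have hdiag : ∀ m ∈ Finset.Ico 1 N, (Fq q k m * Fq q l m) * toA q ρ p m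
      = ((circPairs k l).map fun ch => ρ ch.1 * (Fq q ch.2 m * toA q ρ p m)).sum := by
    intro m hm
    rw [Fq_mul_Fq hq hρ k l m (Finset.mem_Ico.1 hm).1, ← List.sum_map_mul_right]
    simp [List.map_map, Function.comp, mul_assoc]
  rw [Finset.sum_congr rfl hdiag, swap]
  congr 1
  refine List.map_congr_left fun ch _ => ?_
  rw [Finset.mul_sum]

lemma Atr_mul_Atr (hq : Complex.abs q < 1) (hρ : ρ hb = 1 - q) :
    ∀ u v : List ℕ, ∀ N : ℕ,
      Atr (Fq q) u N * Atr (Fq q) v N = toA q ρ (Stf u v) N := by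
  intro u v
  induction u, v using Stf.induct with
  | case1 v => intro N; simp [Stf, toA, Atr]
  | case2 k u => intro N; simp [Stf, toA, Atr]
  | case3 k u l v ih1 ih2 ih3 =>
      intro N
      rw [Atr_cons, Atr_cons, sum_mul_sum_split, Stf, toA_append, toA_append,
        toA_consmap, toA_consmap, toA_circTerm hq hρ]
      congr 1
      · congr 1
        · refine Finset.sum_congr rfl fun m _ => ?_
          rw [← ih1, ← Atr_cons]; ring
        · refine Finset.sum_congr rfl fun m _ => ?_
          rw [← ih2, ← Atr_cons]; ring
      · refine Finset.sum_congr rfl fun m _ => ?_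
        rw [← ih3]; ring
end ToA

-- ### tuple finsets
open scoped Classical in
def Tup (r N : ℕ) : Finset (Fin r → ℕ) :=
  (Fintype.piFinset fun _ => Finset.range N).filter fun f => StrictAnti f ∧ ∀ i, 0 < f i

open scoped Classical in
lemma mem_Tup {r N : ℕ} {f : Fin r → ℕ} :
    f ∈ Tup r N ↔ (∀ i, f i < N) ∧ StrictAnti f ∧ ∀ i, 0 < f i := by
  simp [Tup, Fintype.mem_piFinset]

lemma Tup_mono {r : ℕ} : Monotone (Tup r) := by
  intro N M h f hf
  rw [mem_Tup] at hf ⊢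
  exact ⟨fun i => lt_of_lt_of_le (hf.1 i) h, hf.2⟩

lemma strictAnti_cons {r : ℕ} {m : ℕ} {t : Fin r → ℕ}
    (ht : StrictAnti t) (hm : ∀ i, t i < m) : StrictAnti (Fin.cons m t) := by
  intro a b hab
  induction b using Fin.cases with
  | zero => exact absurd hab (Fin.not_lt_zero a)
  | succ j =>
      induction a using Fin.cases with
      | zero => simpa using hm j
      | succ i =>
          rw [Fin.cons_succ, Fin.cons_succ]
          exact ht (by exact_mod_cast Fin.succ_lt_succ_iff.1 hab)

lemma Atr_eq_sum {R : Type*} [CommSemiring R] (φ : ℕ → ℕ → R) (l : List ℕ) (N : ℕ) :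
    Atr φ l N = ∑ t ∈ Tup l.length N, ∏ i, φ (l.get i) (t i) := by
  induction l generalizing N with
  | nil =>
      have : Tup 0 N = {(fun i => i.elim0 : Fin 0 → ℕ)} := by
        ext f
        rw [mem_Tup]
        simp only [Finset.mem_singleton]
        constructor
        · intro _; funext i; exact i.elim0
        · rintro rfl
          exact ⟨fun i => i.elim0, fun a => a.elim0, fun i => i.elim0⟩
      simp [Atr, this]
  | cons k u ih =>
      rw [Atr_cons]
      simp only [List.length_cons]
      rw [Finset.sum_congr rfl fun m hm => by
        rw [ih m, Finset.mul_sum]]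
      rw [Finset.sum_sigma']
      refine Finset.sum_nbij' (fun p => Fin.cons p.1 p.2) (fun t => ⟨t 0, Fin.tail t⟩)
        ?_ ?_ ?_ ?_ ?_
      · rintro ⟨m, t⟩ hp
        simp only [Finset.mem_sigma, Finset.mem_Ico] at hp
        obtain ⟨⟨hm1, hmN⟩, ht⟩ := hp
        rw [mem_Tup] at ht ⊢
        refine ⟨?_, strictAnti_cons ht.2.1 fun i => ht.1 i, ?_⟩
        · intro i
          induction i using Fin.cases with
          | zero => simpa using hmN
          | succ j => simpa using lt_trans (ht.1 j) hmN
        · intro i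
          induction i using Fin.cases with
          | zero => simpa using Nat.succ_le_iff.mp hm1
          | succ j => simpa using ht.2.2 j
      · intro t ht
        rw [mem_Tup] at ht
        simp only [Finset.mem_sigma, Finset.mem_Ico]
        refine ⟨⟨ht.2.2 0, ht.1 0⟩, ?_⟩
        rw [mem_Tup]
        exact ⟨fun i => ht.2.1 (Fin.succ_pos i), ht.2.1.comp_strictMono (Fin.strictMono_succ),
          fun i => ht.2.2 _⟩
      · rintro ⟨m, t⟩ _
        simp [Fin.tail_cons]
      · intro t _
        simp [Fin.cons_self_tail]
      · rintro ⟨m, t⟩ _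
        rw [Fin.prod_univ_succ]
        simp [Fin.cons_succ, List.get]

-- ### bounds and summability
section Bounds
variable {q : ℂ}

def nF (q : ℂ) (k m : ℕ) : ℝ := Complex.abs (Fq q k m)

def cb (q : ℂ) : ℝ := Complex.abs (1 - q) / (1 - Complex.abs q)

lemma one_sub_nq_pos (hq : Complex.abs q < 1) : 0 < 1 - Complex.abs q := by linarith

lemma one_sub_le_abs_one_sub_pow (hq : Complex.abs q < 1) {m : ℕ} (hm : 1 ≤ m) :
    1 - Complex.abs q ≤ Complex.abs (1 - q ^ m) := by
  have h3 : Complex.abs (q ^ m) ≤ Complex.abs q := by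
    rw [map_pow]
    calc Complex.abs q ^ m ≤ Complex.abs q ^ 1 :=
      pow_le_pow_of_le_one (Complex.abs.nonneg q) hq.le hm
    _ = Complex.abs q := pow_one _
  have h4 := Complex.abs.le_sub 1 (q ^ m)
  rw [map_one] at h4
  linarith

lemma one_le_cb (hq : Complex.abs q < 1) : 1 ≤ cb q := by
  rw [cb, le_div_iff₀ (one_sub_nq_pos hq), one_mul]
  simpa using one_sub_le_abs_one_sub_pow hq (le_refl 1)

lemma cb_pos (hq : Complex.abs q < 1) : 0 < cb q := lt_of_lt_of_le one_pos (one_le_cb hq)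

lemma abs_qint_ge (hq : Complex.abs q < 1) {m : ℕ} (hm : 1 ≤ m) :
    1 ≤ cb q * Complex.abs (qint q m) := by
  have h1 : (0:ℝ) < Complex.abs (1 - q) := Complex.abs.pos (one_sub_ne_zero hq)
  have h2 := one_sub_le_abs_one_sub_pow hq hm
  rw [qint, map_div₀, cb, div_mul_div_comm, le_div_iff₀ (mul_pos (one_sub_nq_pos hq) h1), one_mul]
  nlinarith [Complex.abs.nonneg (1 - q ^ m)]

lemma div_pow_le_mul_pow {x A c : ℝ} (hx : 0 ≤ x) (hA : 0 < A) (h1 : 1 ≤ c * A) (n : ℕ) :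
    x / A ^ n ≤ x * c ^ n := by
  rw [div_le_iff₀ (pow_pos hA n)]
  calc x = x * 1 := (mul_one x).symm
  _ ≤ x * (c * A) ^ n := mul_le_mul_of_nonneg_left (one_le_pow₀ h1) hx
  _ = x * c ^ n * A ^ n := by rw [mul_pow]; ring

lemma nq_pow_le_one {m : ℕ} (hq : Complex.abs q < 1) : Complex.abs q ^ m ≤ 1 :=
  pow_le_one₀ (Complex.abs.nonneg q) hq.le

lemma abs_qint_pos (hq : Complex.abs q < 1) {m : ℕ} (hm : 1 ≤ m) :
    0 < Complex.abs (qint q m) :=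
  Complex.abs.pos (qint_ne_zero hq hm)

lemma nF_le_decay (hq : Complex.abs q < 1) {k : ℕ} (hk : k ≠ 1) {m : ℕ} (hm : 1 ≤ m) :
    nF q k m ≤ cb q ^ (k + 1) * Complex.abs q ^ m := by
  have hA := abs_qint_pos hq hm
  have h1 := abs_qint_ge hq hm
  have hqnn := Complex.abs.nonneg q
  have hcb := one_le_cb hq
  rcases k with _ | _ | k
  · rw [nF, Fq, map_div₀, map_pow]
    calc Complex.abs q ^ m / Complex.abs (qint q m)
        = Complex.abs q ^ m / Complex.abs (qint q m) ^ 1 := by rw [pow_one]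
      _ ≤ Complex.abs q ^ m * cb q ^ 1 :=
          div_pow_le_mul_pow (pow_nonneg hqnn m) hA h1 1
      _ = cb q ^ (0 + 1) * Complex.abs q ^ m := by ring
  · exact absurd rfl hk
  · rw [nF, Fq, map_div₀, map_pow, map_pow]
    calc Complex.abs q ^ ((k + 1) * m) / Complex.abs (qint q m) ^ (k + 2)
        ≤ Complex.abs q ^ ((k + 1) * m) * cb q ^ (k + 2) :=
          div_pow_le_mul_pow (pow_nonneg hqnn _) hA h1 _
      _ ≤ Complex.abs q ^ m * cb q ^ (k + 2) := by
          apply mul_le_mul_of_nonneg_right _ (pow_nonneg (by linarith) _)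
          exact pow_le_pow_of_le_one hqnn hq.le (Nat.le_mul_of_pos_left m (Nat.succ_pos k))
      _ ≤ Complex.abs q ^ m * cb q ^ (k + 2 + 1) := by
          apply mul_le_mul_of_nonneg_left (pow_le_pow_right₀ hcb (Nat.le_succ _))
            (pow_nonneg hqnn m)
      _ = cb q ^ (k + 2 + 1) * Complex.abs q ^ m := by ring

lemma nF_le_const (hq : Complex.abs q < 1) (k : ℕ) {m : ℕ} (hm : 1 ≤ m) :
    nF q k m ≤ cb q ^ (k + 1) := by
  have hA := abs_qint_pos hq hm
  have h1 := abs_qint_ge hq hm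
  have hqnn := Complex.abs.nonneg q
  rcases k with _ | k
  · rw [nF, Fq, map_div₀, map_pow]
    calc Complex.abs q ^ m / Complex.abs (qint q m)
        = Complex.abs q ^ m / Complex.abs (qint q m) ^ 1 := by rw [pow_one]
      _ ≤ Complex.abs q ^ m * cb q ^ 1 := div_pow_le_mul_pow (pow_nonneg hqnn m) hA h1 1
      _ ≤ 1 * cb q ^ 1 :=
          mul_le_mul_of_nonneg_right (nq_pow_le_one hq) (pow_nonneg (cb_pos hq).le 1)
      _ = cb q ^ (0 + 1) := by ring
  · rw [nF, Fq, map_div₀, map_pow, map_pow]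
    calc Complex.abs q ^ (k * m) / Complex.abs (qint q m) ^ (k + 1)
        ≤ Complex.abs q ^ (k * m) * cb q ^ (k + 1) :=
          div_pow_le_mul_pow (pow_nonneg hqnn _) hA h1 _
      _ ≤ 1 * cb q ^ (k + 1) :=
          mul_le_mul_of_nonneg_right (nq_pow_le_one hq) (pow_nonneg (cb_pos hq).le _)
      _ ≤ cb q ^ (k + 1 + 1) := by
          rw [one_mul]
          exact pow_le_pow_right₀ (one_le_cb hq) (Nat.le_succ _)
end Bounds

-- ### summability and limits
section Limits
variable {q : ℂ}

lemma nF_nonneg (q : ℂ) (k m : ℕ) : 0 ≤ nF q k m := Complex.abs.nonneg _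

lemma Atr_nF_nonneg (u : List ℕ) (N : ℕ) : 0 ≤ Atr (nF q) u N := by
  induction u generalizing N with
  | nil => norm_num [Atr]
  | cons k u ih =>
      rw [Atr_cons]
      exact Finset.sum_nonneg fun m _ => mul_nonneg (nF_nonneg q k m) (ih m)

lemma Atr_nF_poly (hq : Complex.abs q < 1) (u : List ℕ) :
    ∃ D : ℝ, 0 ≤ D ∧ ∀ m : ℕ, Atr (nF q) u m ≤ D * (m:ℝ) ^ u.length := by
  induction u with
  | nil => exact ⟨1, zero_le_one, fun m => by simp [Atr]⟩
  | cons k u ih =>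
      obtain ⟨D, hD0, hD⟩ := ih
      have hcb := (cb_pos hq).le
      refine ⟨cb q ^ (k+1) * D, by positivity, fun m => ?_⟩
      rw [Atr_cons, List.length_cons]
      calc ∑ n ∈ Finset.Ico 1 m, nF q k n * Atr (nF q) u n
          ≤ ∑ _n ∈ Finset.Ico 1 m, cb q ^ (k+1) * (D * (m:ℝ) ^ u.length) := by
            refine Finset.sum_le_sum fun n hn => ?_
            obtain ⟨hn1, hn2⟩ := Finset.mem_Ico.1 hn
            refine mul_le_mul (nF_le_const hq k hn1) ?_ (Atr_nF_nonneg u n) (by positivity)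
            calc Atr (nF q) u n ≤ D * (n:ℝ) ^ u.length := hD n
              _ ≤ D * (m:ℝ) ^ u.length := by
                  apply mul_le_mul_of_nonneg_left _ hD0
                  exact pow_le_pow_left₀ (by positivity) (by exact_mod_cast hn2.le) _
        _ = ((Finset.Ico 1 m).card : ℝ) * (cb q ^ (k+1) * (D * (m:ℝ) ^ u.length)) := by
            rw [Finset.sum_const, nsmul_eq_mul]
        _ ≤ (m : ℝ) * (cb q ^ (k+1) * (D * (m:ℝ) ^ u.length)) := by
            apply mul_le_mul_of_nonneg_right _ (by positivity)
            rw [Nat.card_Ico]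
            exact_mod_cast Nat.sub_le m 1
        _ = cb q ^ (k+1) * D * (m:ℝ) ^ (u.length + 1) := by rw [pow_succ]; ring

lemma Atr_nF_bounded (hq : Complex.abs q < 1) {l : List ℕ} (hl : l.head? ≠ some 1) :
    ∃ B : ℝ, ∀ N, Atr (nF q) l N ≤ B := by
  cases l with
  | nil => exact ⟨1, fun N => by simp [Atr]⟩
  | cons k u =>
      have hk : k ≠ 1 := by simpa using hl
      obtain ⟨D, hD0, hD⟩ := Atr_nF_poly hq u
      have hsum : Summable (fun n : ℕ => (n:ℝ) ^ u.length * Complex.abs q ^ n) := by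
        have h1 : ‖Complex.abs q‖ < 1 := by
          rw [Real.norm_eq_abs, abs_of_nonneg (Complex.abs.nonneg q)]; exact hq
        exact summable_pow_mul_geometric_of_norm_lt_one u.length h1
      have hsum2 := hsum.mul_left (cb q ^ (k+1) * D)
      refine ⟨∑' n : ℕ, (cb q ^ (k+1) * D) * ((n:ℝ) ^ u.length * Complex.abs q ^ n),
        fun N => ?_⟩
      rw [Atr_cons]
      have hcb := (cb_pos hq).le
      calc ∑ n ∈ Finset.Ico 1 N, nF q k n * Atr (nF q) u n
          ≤ ∑ n ∈ Finset.Ico 1 N,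
              (cb q ^ (k+1) * D) * ((n:ℝ) ^ u.length * Complex.abs q ^ n) := by
            refine Finset.sum_le_sum fun n hn => ?_
            obtain ⟨hn1, _⟩ := Finset.mem_Ico.1 hn
            calc nF q k n * Atr (nF q) u n
                ≤ (cb q ^ (k+1) * Complex.abs q ^ n) * (D * (n:ℝ) ^ u.length) :=
                  mul_le_mul (nF_le_decay hq hk hn1) (hD n) (Atr_nF_nonneg u n)
                    (by positivity)
              _ = (cb q ^ (k+1) * D) * ((n:ℝ) ^ u.length * Complex.abs q ^ n) := by ring
        _ ≤ ∑' n : ℕ, (cb q ^ (k+1) * D) * ((n:ℝ) ^ u.length * Complex.abs q ^ n) :=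
            Summable.sum_le_tsum _ (fun n _ => by positivity) hsum2

open scoped Classical in
lemma summable_zeta (hq : Complex.abs q < 1) {l : List ℕ} (hl : l.head? ≠ some 1) :
    Summable (fun t : {f : Fin l.length → ℕ // StrictAnti f ∧ ∀ i, 0 < f i} =>
      ∏ i, Fq q (l.get i) (t.1 i)) := by
  obtain ⟨B, hB⟩ := Atr_nF_bounded hq hl
  apply Summable.of_norm
  apply summable_of_sum_le (c := B)
  · intro t
    exact norm_nonneg _
  · intro s
    obtain ⟨N, hsN⟩ : ∃ N, ∀ t ∈ s, ∀ i, t.1 i < N := by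
      refine ⟨s.sup (fun t => Finset.univ.sup t.1) + 1, fun t ht i => ?_⟩
      have h1 : t.1 i ≤ Finset.univ.sup t.1 := Finset.le_sup (Finset.mem_univ i)
      have h2 : Finset.univ.sup t.1 ≤ s.sup (fun t => Finset.univ.sup t.1) :=
        Finset.le_sup (f := fun t => Finset.univ.sup t.1) ht
      exact Nat.lt_succ_of_le (le_trans h1 h2)
    have hsub : s.map (Function.Embedding.subtype _) ⊆ Tup l.length N := by
      intro f hf
      rw [Finset.mem_map] at hf
      obtain ⟨t, ht, rfl⟩ := hf
      rw [mem_Tup]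
      exact ⟨fun i => hsN t ht i, t.2.1, t.2.2⟩
    calc ∑ t ∈ s, ‖∏ i, Fq q (l.get i) (t.1 i)‖
        = ∑ t ∈ s, ∏ i, nF q (l.get i) (t.1 i) := by
          refine Finset.sum_congr rfl fun t _ => ?_
          rw [norm_prod]
          rfl
      _ = ∑ f ∈ s.map (Function.Embedding.subtype _), ∏ i, nF q (l.get i) (f i) := by
          rw [Finset.sum_map]
          rfl
      _ ≤ ∑ f ∈ Tup l.length N, ∏ i, nF q (l.get i) (f i) :=
          Finset.sum_le_sum_of_subset_of_nonneg hsub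
            (fun f _ _ => Finset.prod_nonneg fun i _ => nF_nonneg q _ _)
      _ = Atr (nF q) l N := (Atr_eq_sum (nF q) l N).symm
      _ ≤ B := hB N

set_option maxHeartbeats 2000000 in
open scoped Classical in
lemma tendsto_Atr (hq : Complex.abs q < 1) {l : List ℕ} (hl : l.head? ≠ some 1) :
    Filter.Tendsto (fun N => Atr (Fq q) l N) Filter.atTop (nhds (zetaq q l)) := by
  have hsum := summable_zeta hq hl
  set p : (Fin l.length → ℕ) → Prop := fun f => StrictAnti f ∧ ∀ i, 0 < f i with hp
  have hmono : Monotone (fun N : ℕ => (Tup l.length N).subtype p) := by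
    intro a b hab x hx
    rw [Finset.mem_subtype] at hx ⊢
    exact Tup_mono hab hx
  have hexh : ∀ x : {f // p f}, ∃ N : ℕ, x ∈ (Tup l.length N).subtype p := by
    intro x
    refine ⟨Finset.univ.sup x.1 + 1, ?_⟩
    rw [Finset.mem_subtype, mem_Tup]
    exact ⟨fun i => Nat.lt_succ_of_le (Finset.le_sup (Finset.mem_univ i)), x.2⟩
  have h1 := Filter.tendsto_atTop_finset_of_monotone hmono hexh
  have h2 := hsum.hasSum.comp h1
  have key : ∀ N, Atr (Fq q) l N
      = ∑ t ∈ (Tup l.length N).subtype p, ∏ i, Fq q (l.get i) (t.1 i) := by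
    intro N
    rw [Atr_eq_sum]
    have hmap := Finset.sum_map ((Tup l.length N).subtype p) (Function.Embedding.subtype p)
      (fun f => ∏ i, Fq q (l.get i) (f i))
    rw [Finset.subtype_map_of_mem (fun x hx => ((mem_Tup.1 hx).2 : p x))] at hmap
    exact hmap
  have : (fun N => Atr (Fq q) l N)
      = fun N => ∑ t ∈ (Tup l.length N).subtype p, ∏ i, Fq q (l.get i) (t.1 i) :=
    funext key
  rw [this]
  exact h2
end Limits

-- ### assembling
section Main
variable {q : ℂ} {ρ : CC →ₐ[ℚ] ℂ} {Z : H →+ ℂ} {st : H →ₗ[CC] H →ₗ[CC] H}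

lemma Z_toH (hZ : IsZq ρ q Z) (p : List (CC × List ℕ))
    (hp : ∀ cw ∈ p, cw.2.head? ≠ some 1) :
    Z (toH p) = (p.map fun cw => ρ cw.1 * zetaq q cw.2).sum := by
  induction p with
  | nil => simp [toH]
  | cons a p ih =>
      simp only [toH, List.map_cons, List.sum_cons] at *
      rw [map_add, hZ.1 a.1 (eword a.2), hZ.2 a.2 (hp a (List.mem_cons_self)),
        ih fun cw h => hp cw (List.mem_cons_of_mem _ h)]

lemma tendsto_toA (hq : Complex.abs q < 1) (p : List (CC × List ℕ))
    (hp : ∀ cw ∈ p, cw.2.head? ≠ some 1) :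
    Filter.Tendsto (fun N => toA q ρ p N) Filter.atTop
      (nhds ((p.map fun cw => ρ cw.1 * zetaq q cw.2).sum)) := by
  induction p with
  | nil => simpa [toA] using tendsto_const_nhds
  | cons a p ih =>
      simp only [toA, List.map_cons, List.sum_cons]
      exact (((tendsto_Atr hq (hp a (List.mem_cons_self))).const_mul _).add
        (ih fun cw h => hp cw (List.mem_cons_of_mem _ h)))

lemma main_gen (hq : Complex.abs q < 1) (hst : IsStuffle st) (hρ : ρ hb = 1 - q)
    (hZ : IsZq ρ q Z) (u v : List ℕ) (hu : u.head? ≠ some 1) (hv : v.head? ≠ some 1) :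
    st (eword u) (eword v) ∈ H0 ∧
      Z (st (eword u) (eword v)) = Z (eword u) * Z (eword v) := by
  have hadm := Stf_admissible hu hv
  have he := st_eword st hst u v
  constructor
  · rw [he]
    exact toH_mem_H0 _ hadm
  · rw [he, Z_toH hZ _ hadm, hZ.2 u hu, hZ.2 v hv]
    have h1 : Filter.Tendsto (fun N => Atr (Fq q) u N * Atr (Fq q) v N) Filter.atTop
        (nhds (zetaq q u * zetaq q v)) := (tendsto_Atr hq hu).mul (tendsto_Atr hq hv)
    have h2 : (fun N => Atr (Fq q) u N * Atr (Fq q) v N) = fun N => toA q ρ (Stf u v) N :=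
      funext (Atr_mul_Atr hq hρ u v)
    rw [h2] at h1
    exact (tendsto_nhds_unique h1 (tendsto_toA hq _ hadm)).symm
end Main


/-- For `|q| < 1` and `w, w' ∈ Ĥ⁰`,
`Z_q(w *_q w') = Z_q(w) · Z_q(w')` (and in particular `Ĥ⁰` is closed under `*_q`). -/
theorem stuffle_relation_Zq (q : ℂ) (hq : ‖q‖ < 1)
    (st : H →ₗ[CC] H →ₗ[CC] H) (hst : IsStuffle st)
    (ρ : CC →ₐ[ℚ] ℂ) (hρ : ρ hb = 1 - q)
    (Z : H →+ ℂ) (hZ : IsZq ρ q Z)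
    (w w' : H) (hw : w ∈ H0) (hw' : w' ∈ H0) :
    st w w' ∈ H0 ∧ Z (st w w') = Z w * Z w' := by
  have main : ∀ u : List ℕ, u.head? ≠ some 1 → ∀ w' : H, w' ∈ H0 →
      st (eword u) w' ∈ H0 ∧ Z (st (eword u) w') = Z (eword u) * Z w' := by
    intro u hu w' hw'
    refine Submodule.span_induction ?_ ?_ ?_ ?_ hw'
    · rintro x ⟨v, hv, rfl⟩
      exact main_gen hq hst hρ hZ u v hu hv
    · refine ⟨by rw [map_zero]; exact Submodule.zero_mem _, ?_⟩
      rw [map_zero, map_zero]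
      ring
    · rintro x y _ _ ⟨hx1, hx2⟩ ⟨hy1, hy2⟩
      refine ⟨by rw [map_add]; exact Submodule.add_mem _ hx1 hy1, ?_⟩
      rw [map_add, map_add, hx2, hy2, map_add]
      ring
    · rintro c x _ ⟨hx1, hx2⟩
      refine ⟨by rw [map_smul]; exact Submodule.smul_mem _ c hx1, ?_⟩
      rw [map_smul, hZ.1, hx2, hZ.1]
      ring
  refine Submodule.span_induction ?_ ?_ ?_ ?_ hw
  · rintro x ⟨u, hu, rfl⟩
    exact main u hu w' hw'
  · have h0 : st 0 w' = 0 := by rw [map_zero]; rfl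
    refine ⟨by rw [h0]; exact Submodule.zero_mem _, ?_⟩
    rw [h0, map_zero, zero_mul]
  · rintro x y _ _ ⟨hx1, hx2⟩ ⟨hy1, hy2⟩
    have hadd : st (x + y) w' = st x w' + st y w' := by rw [map_add]; rfl
    refine ⟨by rw [hadd]; exact Submodule.add_mem _ hx1 hy1, ?_⟩
    rw [hadd, map_add, hx2, hy2, map_add]
    ring
  · rintro c x _ ⟨hx1, hx2⟩
    have hsmul : st (c • x) w' = c • st x w' := by rw [map_smul]; rfl
    refine ⟨by rw [hsmul]; exact Submodule.smul_mem _ c hx1, ?_⟩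
    rw [hsmul, hZ.1, hx2, hZ.1]
    ring

end
end

section
/- For every q ∈ ℂ with |q| < 1, all w, w' ∈ Ĥ¹ and all t ∈ ℂ with |t| < 1, one has L_{w ⧢_q w'}(t) = L_w(t) · L_{w'}(t). -/
noncomputable section

/-- The multiple polylogarithm of one variable `L_k(t)` for an index `k`
(a list over `N̂`): `Σ_{m_1 > ⋯ > m_r ≥ 1} t^{m_1} Π_j F_{k_j}(m_j)`; for the
empty index it equals `1`. -/
def Lval (q t : ℂ) (l : List ℕ) : ℂ :=
  ∑' m : {f : Fin l.length → ℕ // StrictAnti f ∧ ∀ i, 0 < f i},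
    (if h : 0 < l.length then t ^ (m.1 ⟨0, h⟩) else 1) *
      ∏ i : Fin l.length, Fq q (l.get i) (m.1 i)

/-- The defining properties of the `𝒞`-linear map `L` evaluated at `t` (as a map on
all of `H` extending the one on `Ĥ¹`): additive, `𝒞`-semilinear along `ρ`, and
sending each monomial `e_k` to `L_k(t)`. -/
def IsLmap (ρ : CC →ₐ[ℚ] ℂ) (q t : ℂ) (L : H →+ ℂ) : Prop :=
  (∀ c : CC, ∀ w : H, L (c • w) = ρ c * L w) ∧
  (∀ l : List ℕ, L (eword l) = Lval q t l)

namespace ShuffleAux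

open Finset PowerSeries

variable (q : ℂ)

/-- coefficient sequence attached to a word in the letters a=0, b=1. -/
def cw : List (Fin 2) → ℕ → ℂ
  | [], m => if m = 0 then 1 else 0
  | (i :: u), m => if i = 0 then (q ^ m / qint q m) * cw u m else ∑ j ∈ Finset.range m, cw u j

/-- coefficient sequence attached to an index. -/
def cE : List ℕ → ℕ → ℂ
  | [], m => if m = 0 then 1 else 0
  | (k :: l), m => Fq q k m * ∑ j ∈ Finset.range m, cE l j

def opA (f : PowerSeries ℂ) : PowerSeries ℂ :=
  PowerSeries.mk fun m => (q ^ m / qint q m) * PowerSeries.coeff m f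

def opB (f : PowerSeries ℂ) : PowerSeries ℂ :=
  PowerSeries.mk fun m => ∑ j ∈ Finset.range m, PowerSeries.coeff j f

def tau : PowerSeries ℂ := PowerSeries.mk fun m => if m = 0 then 0 else 1

@[simp] lemma coeff_opA (f : PowerSeries ℂ) (m : ℕ) :
    PowerSeries.coeff m (opA q f) = (q ^ m / qint q m) * PowerSeries.coeff m f := by
  simp [opA]

@[simp] lemma coeff_opB (f : PowerSeries ℂ) (m : ℕ) :
    PowerSeries.coeff m (opB f) = ∑ j ∈ Finset.range m, PowerSeries.coeff j f := by
  simp [opB]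

lemma opA_add (f g : PowerSeries ℂ) : opA q (f + g) = opA q f + opA q g := by
  ext m; simp [mul_add]

lemma opA_smul (c : ℂ) (f : PowerSeries ℂ) : opA q (c • f) = c • opA q f := by
  ext m; simp; ring

lemma opB_add (f g : PowerSeries ℂ) : opB (f + g) = opB f + opB g := by
  ext m; simp [Finset.sum_add_distrib]

lemma opB_smul (c : ℂ) (f : PowerSeries ℂ) : opB (c • f) = c • opB f := by
  ext m; simp [Finset.mul_sum]

lemma opB_eq (f : PowerSeries ℂ) : opB f = tau * f := by
  ext m
  rw [coeff_opB, PowerSeries.coeff_mul, Finset.Nat.sum_antidiagonal_eq_sum_range_succ_mk]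
  simp only [tau, PowerSeries.coeff_mk]
  rw [Finset.sum_range_succ']
  simp only [if_neg (Nat.succ_ne_zero _), if_pos rfl, one_mul, zero_mul, add_zero, reduceIte]
  have : ∑ x ∈ Finset.range m, (PowerSeries.coeff (m - (x+1))) f
       = ∑ j ∈ Finset.range m, (PowerSeries.coeff j) f := by
    rw [← Finset.sum_range_reflect (fun j => (PowerSeries.coeff j) f) m]
    exact Finset.sum_congr rfl fun j hj => by
      have : m - (j + 1) = m - 1 - j := by omega
      rw [this]
  rw [this]

lemma opB_mul (f g : PowerSeries ℂ) : opB f * g = opB (f * g) := by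
  rw [opB_eq, opB_eq, mul_assoc]


section qfacts

lemma q_ne_one (hq : ‖q‖ < 1) : q ≠ 1 := by
  intro h; rw [h] at hq; simp at hq

lemma one_sub_q_pow_ne_zero (hq : ‖q‖ < 1) {m : ℕ} (hm : 1 ≤ m) : 1 - q ^ m ≠ 0 := by
  have hlt : ‖q ^ m‖ < 1 := by
    rw [norm_pow]
    calc ‖q‖ ^ m ≤ ‖q‖ ^ 1 := by
          apply pow_le_pow_of_le_one (norm_nonneg _) (le_of_lt hq) hm
      _ < 1 := by simpa using hq
  intro h
  have h2 : q ^ m = 1 := by linear_combination -h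
  rw [h2] at hlt
  simp at hlt

lemma one_sub_q_ne_zero (hq : ‖q‖ < 1) : 1 - q ≠ 0 := by
  have := q_ne_one q hq
  intro h
  exact this (by linear_combination -h)

lemma qint_ne_zero (hq : ‖q‖ < 1) {m : ℕ} (hm : 1 ≤ m) : qint q m ≠ 0 := by
  simp only [qint, div_ne_zero_iff]
  exact ⟨one_sub_q_pow_ne_zero q hq hm, one_sub_q_ne_zero q hq⟩

lemma qA_mul (hq : ‖q‖ < 1) {i j : ℕ} (hi : 1 ≤ i) (hj : 1 ≤ j) :
    (q ^ i / qint q i) * (q ^ j / qint q j)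
      = (q ^ (i + j) / qint q (i + j)) * (q ^ i / qint q i + q ^ j / qint q j + (1 - q)) := by
  have h1 : 1 - q ≠ 0 := one_sub_q_ne_zero q hq
  have hi' : 1 - q ^ i ≠ 0 := one_sub_q_pow_ne_zero q hq hi
  have hj' : 1 - q ^ j ≠ 0 := one_sub_q_pow_ne_zero q hq hj
  have hij : 1 - q ^ (i + j) ≠ 0 := one_sub_q_pow_ne_zero q hq (le_trans hi (Nat.le_add_right _ _))
  simp only [qint]
  rw [pow_add] at *
  field_simp
  ring

lemma Fq_zero_eq (m : ℕ) : Fq q 0 m = q ^ m / qint q m := rfl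

lemma Fq_succ_def (k m : ℕ) : Fq q (k+1) m = q ^ (k * m) / (qint q m) ^ (k + 1) := rfl

@[simp] lemma qint_zero : qint q 0 = 0 := by simp [qint]

@[simp] lemma Fq_at_zero (k : ℕ) : Fq q k 0 = 0 := by
  cases k <;> simp [Fq_zero_eq, Fq_succ_def, zero_pow]

lemma Fq_succ_eq (hq : ‖q‖ < 1) {k m : ℕ} (hm : 1 ≤ m) :
    (q ^ m / qint q m) ^ (k + 1) + (1 - q) * (q ^ m / qint q m) ^ k = Fq q (k + 1) m := by
  have h1 : 1 - q ≠ 0 := one_sub_q_ne_zero q hq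
  have hm' : 1 - q ^ m ≠ 0 := one_sub_q_pow_ne_zero q hq hm
  have hqint : qint q m ≠ 0 := qint_ne_zero q hq hm
  have hkey : (1 - q) * qint q m = 1 - q ^ m := by
    simp only [qint]; field_simp
  have e2 : (1 - q) * ((q^m)^k / (qint q m)^k)
      = ((1-q) * (q^m)^k * qint q m) / (qint q m)^(k+1) := by
    rw [pow_succ]
    field_simp
  have e3 : (q^m)^(k+1) + (1-q) * (q^m)^k * qint q m = (q^m)^k := by
    linear_combination (q^m)^k * hkey
  rw [Fq_succ_def, pow_mul', div_pow, div_pow, e2, ← add_div, e3]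

lemma opA_mul_opA (hq : ‖q‖ < 1) (f g : PowerSeries ℂ) (hf : PowerSeries.coeff 0 f = 0)
    (hg : PowerSeries.coeff 0 g = 0) :
    opA q f * opA q g = opA q (opA q f * g + f * opA q g + (1 - q) • (f * g)) := by
  ext m
  rw [PowerSeries.coeff_mul, coeff_opA, map_add, map_add]
  rw [PowerSeries.coeff_mul, PowerSeries.coeff_mul, map_smul, PowerSeries.coeff_mul]
  rw [smul_eq_mul, Finset.mul_sum, ← Finset.sum_add_distrib, ← Finset.sum_add_distrib,
    Finset.mul_sum]
  apply Finset.sum_congr rfl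
  rintro ⟨i, j⟩ hmem
  have hij : i + j = m := Finset.HasAntidiagonal.mem_antidiagonal.mp hmem
  rcases Nat.eq_zero_or_pos i with hi | hi
  · subst hi; simp [hf]
  rcases Nat.eq_zero_or_pos j with hj | hj
  · subst hj; simp [hg]
  simp only [coeff_opA]
  subst hij
  have hkey := qA_mul q hq hi hj
  linear_combination (PowerSeries.coeff i f * PowerSeries.coeff j g) * hkey

end qfacts


section PSsec

variable (rho : CC →ₐ[ℚ] ℂ)

def PSm (f : MonoidAlgebra CC (FreeMonoid (Fin 2))) : PowerSeries ℂ :=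
  f.coeff.sum fun w r => rho r • PowerSeries.mk (cw q (FreeMonoid.toList w))

def PS (x : H) : PowerSeries ℂ :=
  PSm q rho (FreeAlgebra.equivMonoidAlgebraFreeMonoid x)

lemma PSm_zero : PSm q rho 0 = 0 := Finsupp.sum_zero_index

lemma PSm_single (w : FreeMonoid (Fin 2)) (r : CC) :
    PSm q rho (MonoidAlgebra.single w r) = rho r • PowerSeries.mk (cw q (FreeMonoid.toList w)) :=
  Finsupp.sum_single_index (by simp)

lemma PSm_add (f g : MonoidAlgebra CC (FreeMonoid (Fin 2))) :
    PSm q rho (f + g) = PSm q rho f + PSm q rho g :=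
  Finsupp.sum_add_index' (fun w => by simp) (fun w r s => by simp [add_smul])

lemma PSm_smul (c : CC) (f : MonoidAlgebra CC (FreeMonoid (Fin 2))) :
    PSm q rho (c • f) = rho c • PSm q rho f := by
  unfold PSm
  rw [MonoidAlgebra.coeff_smul, Finsupp.sum_smul_index (fun w => by simp), Finsupp.smul_sum]
  exact Finsupp.sum_congr fun w _ => by rw [map_mul, mul_smul]

lemma PS_add (x y : H) : PS q rho (x + y) = PS q rho x + PS q rho y := by
  unfold PS; rw [map_add, PSm_add]

lemma PS_smul (c : CC) (x : H) : PS q rho (c • x) = rho c • PS q rho x := by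
  unfold PS; rw [map_smul, PSm_smul]

lemma PS_zero : PS q rho 0 = 0 := by
  unfold PS; rw [map_zero, PSm_zero]

lemma E_iota (i : Fin 2) :
    FreeAlgebra.equivMonoidAlgebraFreeMonoid (FreeAlgebra.ι CC i)
      = MonoidAlgebra.single (FreeMonoid.of i) 1 := by
  simp [FreeAlgebra.equivMonoidAlgebraFreeMonoid]


lemma PS_one : PS q rho 1 = 1 := by
  unfold PS
  rw [map_one, MonoidAlgebra.one_def, PSm_single]
  ext m
  simp [cw, PowerSeries.coeff_one, FreeMonoid.toList_one]

lemma opA_zero : opA q 0 = 0 := by ext m; simp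
lemma opB_zero : opB 0 = 0 := by ext m; simp

lemma mk_cw_cons_a (u : List (Fin 2)) :
    PowerSeries.mk (cw q ((0 : Fin 2) :: u)) = opA q (PowerSeries.mk (cw q u)) := by
  ext m; simp [cw]

lemma mk_cw_cons_b (u : List (Fin 2)) :
    PowerSeries.mk (cw q ((1 : Fin 2) :: u)) = opB (PowerSeries.mk (cw q u)) := by
  ext m
  simp only [coeff_opB, PowerSeries.coeff_mk]
  rw [show cw q ((1 : Fin 2) :: u) m = ∑ j ∈ Finset.range m, cw q u j from by
    simp [cw]]

lemma PSm_mul_a (f : MonoidAlgebra CC (FreeMonoid (Fin 2))) :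
    PSm q rho (MonoidAlgebra.single (FreeMonoid.of (0 : Fin 2)) 1 * f)
      = opA q (PSm q rho f) := by
  induction f using MonoidAlgebra.induction_linear with
  | zero => rw [mul_zero, PSm_zero, opA_zero]
  | add f g hf hg => rw [mul_add, PSm_add, PSm_add, opA_add, hf, hg]
  | single w r =>
      rw [MonoidAlgebra.single_mul_single, one_mul, PSm_single, PSm_single]
      rw [opA_smul]
      congr 1
      rw [show FreeMonoid.toList (FreeMonoid.of (0 : Fin 2) * w)
          = (0 : Fin 2) :: FreeMonoid.toList w from rfl]
      exact mk_cw_cons_a q _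

lemma PSm_mul_b (f : MonoidAlgebra CC (FreeMonoid (Fin 2))) :
    PSm q rho (MonoidAlgebra.single (FreeMonoid.of (1 : Fin 2)) 1 * f)
      = opB (PSm q rho f) := by
  induction f using MonoidAlgebra.induction_linear with
  | zero => rw [mul_zero, PSm_zero, opB_zero]
  | add f g hf hg => rw [mul_add, PSm_add, PSm_add, opB_add, hf, hg]
  | single w r =>
      rw [MonoidAlgebra.single_mul_single, one_mul, PSm_single, PSm_single]
      rw [opB_smul]
      congr 1
      rw [show FreeMonoid.toList (FreeMonoid.of (1 : Fin 2) * w)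
          = (1 : Fin 2) :: FreeMonoid.toList w from rfl]
      exact mk_cw_cons_b q _

lemma PS_avmul (x : H) : PS q rho (av * x) = opA q (PS q rho x) := by
  unfold PS
  rw [map_mul]
  rw [show FreeAlgebra.equivMonoidAlgebraFreeMonoid av
      = MonoidAlgebra.single (FreeMonoid.of (0 : Fin 2)) 1 from E_iota 0]
  exact PSm_mul_a q rho _

lemma PS_bvmul (x : H) : PS q rho (bv * x) = opB (PS q rho x) := by
  unfold PS
  rw [map_mul]
  rw [show FreeAlgebra.equivMonoidAlgebraFreeMonoid bv
      = MonoidAlgebra.single (FreeMonoid.of (1 : Fin 2)) 1 from E_iota 1]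
  exact PSm_mul_b q rho _

lemma PS_apow (k : ℕ) (x : H) : PS q rho (av ^ k * x) = (opA q)^[k] (PS q rho x) := by
  induction k generalizing x with
  | zero => simp
  | succ k ih =>
      rw [pow_succ, mul_assoc, ih, PS_avmul, Function.iterate_succ_apply]

lemma coeff_opA_iter (k : ℕ) (f : PowerSeries ℂ) (m : ℕ) :
    PowerSeries.coeff m ((opA q)^[k] f) = (q ^ m / qint q m) ^ k * PowerSeries.coeff m f := by
  induction k generalizing f with
  | zero => simp
  | succ k ih => rw [Function.iterate_succ_apply, ih, coeff_opA, pow_succ]; ring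

end PSsec


section evmul

variable (rho : CC →ₐ[ℚ] ℂ)

lemma ev_mul_expand (k : ℕ) (x : H) :
    ev (k+1) * x = av ^ k * (av * (bv * x)) + hb • (av ^ k * (bv * x)) := by
  rw [ev, Algebra.smul_def]
  rw [mul_add (av ^ k) av (algebraMap CC H hb)]
  rw [← Algebra.commutes hb (av ^ k)]
  simp only [add_mul, mul_assoc]

lemma PS_evmul (hq : ‖q‖ < 1) (hrho : rho hb = 1 - q) (k : ℕ) (x : H) :
    PS q rho (ev k * x)
      = PowerSeries.mk (fun m => Fq q k m * ∑ j ∈ Finset.range m,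
          PowerSeries.coeff j (PS q rho x)) := by
  cases k with
  | zero =>
      rw [show ev 0 * x = av * (bv * x) from by rw [ev]; rw [mul_assoc]]
      rw [PS_avmul, PS_bvmul]
      ext m
      simp [Fq_zero_eq]
  | succ k =>
      rw [ev_mul_expand, PS_add, PS_smul, hrho]
      rw [PS_apow, PS_apow, PS_avmul, PS_bvmul]
      ext m
      rw [map_add, coeff_opA_iter, coeff_opA, coeff_opB,
        LinearMap.map_smul, coeff_opA_iter, coeff_opB, PowerSeries.coeff_mk, smul_eq_mul]
      rcases Nat.eq_zero_or_pos m with hm | hm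
      · subst hm; simp
      · have hfq := Fq_succ_eq q hq (k := k) hm
        linear_combination (∑ j ∈ Finset.range m, PowerSeries.coeff j (PS q rho x)) * hfq

lemma eword_nil : eword [] = 1 := rfl

lemma eword_cons (k : ℕ) (l : List ℕ) : eword (k :: l) = ev k * eword l := rfl

lemma PS_eword (hq : ‖q‖ < 1) (hrho : rho hb = 1 - q) (l : List ℕ) (m : ℕ) :
    PowerSeries.coeff m (PS q rho (eword l)) = cE q l m := by
  induction l generalizing m with
  | nil => rw [eword_nil, PS_one]; simp [cE, PowerSeries.coeff_one]
  | cons k l ih =>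
      rw [eword_cons, PS_evmul q rho hq hrho, PowerSeries.coeff_mk]
      show _ = Fq q k m * ∑ j ∈ Finset.range m, cE q l j
      congr 1
      exact Finset.sum_congr rfl fun j _ => ih j

end evmul


section words

def W (u : List (Fin 2)) : H := (u.map (FreeAlgebra.ι CC)).prod

def Wd (u : List (Fin 2)) : Prop := u = [] ∨ u.getLast? = some 1

@[simp] lemma W_nil : W [] = 1 := rfl

lemma W_cons (i : Fin 2) (u : List (Fin 2)) : W (i :: u) = FreeAlgebra.ι CC i * W u := rfl

lemma W_append (u v : List (Fin 2)) : W (u ++ v) = W u * W v := by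
  simp [W, List.map_append, List.prod_append]

lemma Wd_nil : Wd ([] : List (Fin 2)) := Or.inl rfl

lemma Wd_cons_tail {i : Fin 2} {u : List (Fin 2)} (h : Wd (i :: u)) : Wd u := by
  rcases h with h | h
  · exact absurd h (List.cons_ne_nil _ _)
  · rcases u with _ | ⟨j, u⟩
    · exact Or.inl rfl
    · rw [List.getLast?_cons_cons] at h
      exact Or.inr h

lemma Wd_cons_a_ne {u : List (Fin 2)} (h : Wd ((0 : Fin 2) :: u)) : u ≠ [] := by
  rintro rfl
  rcases h with h | h
  · exact List.cons_ne_nil _ _ h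
  · simp at h

lemma Wd_cons {i : Fin 2} {u : List (Fin 2)} (hu : Wd u) (hne : u ≠ []) : Wd (i :: u) := by
  rcases hu with rfl | h
  · exact absurd rfl hne
  · rcases u with _ | ⟨j, u⟩
    · exact absurd rfl hne
    · exact Or.inr (by rw [List.getLast?_cons_cons]; exact h)

lemma Wd_append {u v : List (Fin 2)} (hu : Wd u) (hv : Wd v) : Wd (u ++ v) := by
  rcases hv with rfl | h
  · simpa using hu
  · rcases v with _ | ⟨j, v⟩
    · simpa using hu
    · exact Or.inr (by
        rw [List.getLast?_append_of_ne_nil _ (List.cons_ne_nil _ _)]; exact h)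

def Tset : Set H := {x | ∃ u : List (Fin 2), Wd u ∧ x = W u}

def Tbset : Set H := {x | ∃ u : List (Fin 2), Wd u ∧ u ≠ [] ∧ x = W u}

lemma Tbset_subset_Tset : Tbset ⊆ Tset := by
  rintro x ⟨u, hu, _, rfl⟩; exact ⟨u, hu, rfl⟩

lemma eword_singleton (k : ℕ) : eword [k] = ev k := by simp [eword]

lemma eword_append (l l' : List ℕ) : eword (l ++ l') = eword l * eword l' := by
  simp [eword, List.map_append, List.prod_append]

lemma eword_mem_H1 (l : List ℕ) : eword l ∈ H1 :=
  Submodule.subset_span ⟨l, rfl⟩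

lemma ev_mem_H1 (k : ℕ) : ev k ∈ H1 := by
  rw [← eword_singleton]; exact eword_mem_H1 [k]

lemma H1_mul {x y : H} (hx : x ∈ H1) (hy : y ∈ H1) : x * y ∈ H1 := by
  induction hx, hy using Submodule.span_induction₂ with
  | mem_mem a b ha hb =>
      obtain ⟨l, rfl⟩ := ha; obtain ⟨l', rfl⟩ := hb
      rw [← eword_append]; exact eword_mem_H1 _
  | zero_left b hb => rw [zero_mul]; exact zero_mem _
  | zero_right a ha => rw [mul_zero]; exact zero_mem _
  | add_left x y z hx hy hz h1 h2 => rw [add_mul]; exact add_mem h1 h2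
  | add_right x y z hx hy hz h1 h2 => rw [mul_add]; exact add_mem h1 h2
  | smul_left r x y hx hy h => rw [smul_mul_assoc]; exact Submodule.smul_mem _ _ h
  | smul_right r x y hx hy h => rw [mul_smul_comm]; exact Submodule.smul_mem _ _ h

lemma bv_eq_smul : bv = (LaurentPolynomial.T (-1) : CC) • (ev 1 - ev 0) := by
  have h1 : ev 1 - ev 0 = hb • bv := by
    show av ^ 0 * (av + algebraMap CC H hb) * bv - av * bv = hb • bv
    rw [pow_zero, one_mul, add_mul, Algebra.smul_def]
    abel
  rw [h1, smul_smul]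
  rw [show (LaurentPolynomial.T (-1) : CC) * hb = 1 from by
    rw [hb, ← LaurentPolynomial.T_add]; norm_num]
  rw [one_smul]

lemma anb_mem_H1 : ∀ n : ℕ, av ^ n * bv ∈ H1 := by
  intro n
  induction n with
  | zero =>
      rw [pow_zero, one_mul, bv_eq_smul]
      exact Submodule.smul_mem _ _ (sub_mem (ev_mem_H1 1) (ev_mem_H1 0))
  | succ n ih =>
      have hexp : ev (n + 1) = av ^ (n+1) * bv + hb • (av ^ n * bv) := by
        show av ^ n * (av + algebraMap CC H hb) * bv = _
        rw [mul_add, ← Algebra.commutes hb (av ^ n), add_mul, Algebra.smul_def, pow_succ]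
        rw [mul_assoc (algebraMap CC H hb)]
      have : av ^ (n+1) * bv = ev (n+1) - hb • (av ^ n * bv) := by
        rw [hexp]; abel
      rw [this]
      exact sub_mem (ev_mem_H1 _) (Submodule.smul_mem _ _ ih)

lemma apow_W_mem : ∀ n (u : List (Fin 2)), u.length ≤ n → Wd u → u ≠ [] →
    ∀ kk : ℕ, av ^ kk * W u ∈ H1 := by
  intro n
  induction n with
  | zero =>
      rintro (_ | ⟨i, u⟩) hlen hu hne
      · exact absurd rfl hne
      · simp at hlen
  | succ n ih =>
      rintro (_ | ⟨i, u'⟩) hlen hu hne kk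
      · exact absurd rfl hne
      have hi2 : i = 0 ∨ i = 1 := by
        rcases i with ⟨iv, hiv⟩
        interval_cases iv
        exacts [Or.inl rfl, Or.inr rfl]
      rcases hi2 with rfl | rfl
      · have hne' : u' ≠ [] := Wd_cons_a_ne hu
        have hu' : Wd u' := Wd_cons_tail hu
        rw [W_cons]
        rw [show av ^ kk * (FreeAlgebra.ι CC 0 * W u') = av ^ (kk+1) * W u' from by
          rw [pow_succ, mul_assoc]; rfl]
        exact ih u' (by simp at hlen; omega) hu' hne' (kk+1)
      · rw [W_cons]
        rw [show av ^ kk * (FreeAlgebra.ι CC 1 * W u') = (av ^ kk * bv) * W u' from by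
          rw [mul_assoc]; rfl]
        rcases eq_or_ne u' [] with rfl | hne'
        · rw [W_nil, mul_one]; exact anb_mem_H1 kk
        · have hu' : Wd u' := Wd_cons_tail hu
          have : W u' ∈ H1 := by
            have := ih u' (by simp at hlen; omega) hu' hne' 0
            simpa using this
          exact H1_mul (anb_mem_H1 kk) this

lemma W_mem_H1 {u : List (Fin 2)} (hu : Wd u) : W u ∈ H1 := by
  rcases eq_or_ne u [] with rfl | hne
  · rw [W_nil, ← eword_nil]; exact eword_mem_H1 []
  · have := apow_W_mem u.length u le_rfl hu hne 0
    simpa using this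

lemma Tset_subset_H1 : Tset ⊆ (H1 : Set H) := by
  rintro x ⟨u, hu, rfl⟩; exact W_mem_H1 hu

lemma mulW_spanT (u : List (Fin 2)) (hu : Wd u) :
    ∀ x ∈ Submodule.span CC Tset, W u * x ∈ Submodule.span CC Tset := by
  intro x hx
  induction hx using Submodule.span_induction with
  | mem y hy =>
      obtain ⟨v, hv, rfl⟩ := hy
      rw [← W_append]
      exact Submodule.subset_span ⟨u ++ v, Wd_append hu hv, rfl⟩
  | zero => rw [mul_zero]; exact zero_mem _
  | add y z hy hz h1 h2 => rw [mul_add]; exact add_mem h1 h2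
  | smul r y hy h => rw [mul_smul_comm]; exact Submodule.smul_mem _ _ h

lemma Wab (n : ℕ) : av ^ n * bv = W (List.replicate n 0 ++ [1]) := by
  induction n with
  | zero => simp [W]; rfl
  | succ n ih =>
      rw [List.replicate_succ, List.cons_append, W_cons, ← ih, pow_succ']
      rw [mul_assoc]
      rfl

lemma Wd_anb (n : ℕ) : Wd (List.replicate n (0 : Fin 2) ++ [1]) :=
  Or.inr (by rw [List.getLast?_append_of_ne_nil _ (by simp)]; rfl)

end words


section membership

lemma ev0_eq_W : ev 0 = W [0, 1] := by
  show av * bv = FreeAlgebra.ι CC 0 * (FreeAlgebra.ι CC 1 * [].prod)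
  rw [List.prod_nil, mul_one]
  rfl

lemma evk_mul_mem (k : ℕ) (x : H) (hx : x ∈ Submodule.span CC Tset) :
    ev k * x ∈ Submodule.span CC Tset := by
  cases k with
  | zero =>
      rw [ev0_eq_W]
      exact mulW_spanT [0,1] (Wd_anb 1) x hx
  | succ k =>
      rw [ev_mul_expand]
      have h1 : av ^ k * (av * (bv * x)) = W (List.replicate (k+1) 0 ++ [1]) * x := by
        rw [← Wab]
        simp [pow_succ, mul_assoc]
      have h2 : av ^ k * (bv * x) = W (List.replicate k 0 ++ [1]) * x := by
        rw [← Wab, mul_assoc]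
      rw [h1, h2]
      exact add_mem (mulW_spanT _ (Wd_anb (k+1)) x hx)
        (Submodule.smul_mem _ _ (mulW_spanT _ (Wd_anb k) x hx))

lemma eword_mem_spanT (l : List ℕ) : eword l ∈ Submodule.span CC Tset := by
  induction l with
  | nil => exact Submodule.subset_span ⟨[], Wd_nil, rfl⟩
  | cons k l ih => rw [eword_cons]; exact evk_mul_mem k _ ih

lemma H1_le_spanT : H1 ≤ Submodule.span CC Tset := by
  rw [H1, Submodule.span_le]
  rintro x ⟨l, rfl⟩
  exact eword_mem_spanT l

lemma avmul_spanTb (x : H) (hx : x ∈ Submodule.span CC Tbset) :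
    av * x ∈ Submodule.span CC Tbset := by
  induction hx using Submodule.span_induction with
  | mem y hy =>
      obtain ⟨v, hv, hne, rfl⟩ := hy
      exact Submodule.subset_span ⟨0 :: v, Wd_cons hv hne, List.cons_ne_nil _ _, rfl⟩
  | zero => rw [mul_zero]; exact zero_mem _
  | add y z hy hz h1 h2 => rw [mul_add]; exact add_mem h1 h2
  | smul r y hy h => rw [mul_smul_comm]; exact Submodule.smul_mem _ _ h

lemma bvmul_spanTb (x : H) (hx : x ∈ Submodule.span CC Tbset) :
    bv * x ∈ Submodule.span CC Tbset := by
  induction hx using Submodule.span_induction with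
  | mem y hy =>
      obtain ⟨v, hv, hne, rfl⟩ := hy
      exact Submodule.subset_span ⟨1 :: v, Wd_cons hv hne, List.cons_ne_nil _ _, rfl⟩
  | zero => rw [mul_zero]; exact zero_mem _
  | add y z hy hz h1 h2 => rw [mul_add]; exact add_mem h1 h2
  | smul r y hy h => rw [mul_smul_comm]; exact Submodule.smul_mem _ _ h

lemma bv_W_mem {v : List (Fin 2)} (hv : Wd v) : bv * W v ∈ Submodule.span CC Tbset := by
  have hwd : Wd (1 :: v) := by
    rcases eq_or_ne v [] with rfl | hne
    · exact Or.inr rfl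
    · exact Wd_cons hv hne
  exact Submodule.subset_span ⟨1 :: v, hwd, List.cons_ne_nil _ _, rfl⟩

end membership

section PSW

variable (rho : CC →ₐ[ℚ] ℂ)

lemma E_W (u : List (Fin 2)) :
    FreeAlgebra.equivMonoidAlgebraFreeMonoid (W u)
      = MonoidAlgebra.single (FreeMonoid.ofList u) 1 := by
  induction u with
  | nil => rw [W_nil, map_one]; rfl
  | cons i u ih =>
      rw [W_cons, map_mul, E_iota, ih, MonoidAlgebra.single_mul_single, one_mul]
      rfl

lemma PS_W (u : List (Fin 2)) : PS q rho (W u) = PowerSeries.mk (cw q u) := by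
  unfold PS
  rw [E_W, PSm_single, map_one, one_smul]
  rfl

lemma cw_zero {u : List (Fin 2)} (h : u ≠ []) : cw q u 0 = 0 := by
  rcases u with _ | ⟨i, u⟩
  · exact absurd rfl h
  · show (if i = 0 then (q ^ 0 / qint q 0) * cw q u 0 else ∑ j ∈ Finset.range 0, cw q u j) = 0
    split_ifs <;> simp

lemma coeff_zero_PS_W {u : List (Fin 2)} (h : u ≠ []) :
    PowerSeries.coeff 0 (PS q rho (W u)) = 0 := by
  rw [PS_W, PowerSeries.coeff_mk, cw_zero q h]

end PSW

section mainsh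

variable (rho : CC →ₐ[ℚ] ℂ)

lemma opB_mul' (f g : PowerSeries ℂ) : f * opB g = opB (f * g) := by
  rw [opB_eq, opB_eq]; ring

lemma main_sh (hq : ‖q‖ < 1) (hrho : rho hb = 1 - q)
    (sh : H →ₗ[CC] H →ₗ[CC] H)
    (hsh1 : ∀ w : H, sh 1 w = w) (hsh2 : ∀ w : H, sh w 1 = w)
    (hshaa : ∀ w w' : H, sh (av * w) (av * w') =
      av * (sh (av * w) w' + sh w (av * w') + hb • sh w w'))
    (hshb1 : ∀ w w' : H, sh (bv * w) w' = bv * sh w w')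
    (hshb2 : ∀ w w' : H, sh w (bv * w') = bv * sh w w') :
    ∀ n (u v : List (Fin 2)), u.length + v.length = n → Wd u → Wd v →
      PS q rho (sh (W u) (W v)) = PS q rho (W u) * PS q rho (W v) ∧
      (u ≠ [] → v ≠ [] → sh (W u) (W v) ∈ Submodule.span CC Tbset) := by
  intro n
  induction n using Nat.strong_induction_on with
  | _ n IHn =>
  rintro (_ | ⟨i, u'⟩) v hn hu hv
  · refine ⟨?_, fun h _ => absurd rfl h⟩
    rw [W_nil, hsh1, PS_one, one_mul]
  rcases v with _ | ⟨j, v'⟩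
  · refine ⟨?_, fun _ h => absurd rfl h⟩
    rw [W_nil, hsh2, PS_one, mul_one]
  have hu' : Wd u' := Wd_cons_tail hu
  have hv' : Wd v' := Wd_cons_tail hv
  have hlen : u'.length + (j :: v').length < n := by simp at hn ⊢; omega
  have hlen2 : (i :: u').length + v'.length < n := by simp at hn ⊢; omega
  have hlen3 : u'.length + v'.length < n := by simp at hn ⊢; omega
  have hi2 : i = 0 ∨ i = 1 := by
    rcases i with ⟨iv, hiv⟩; interval_cases iv
    exacts [Or.inl rfl, Or.inr rfl]
  have hbv : FreeAlgebra.ι CC 1 = bv := rfl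
  have hav : FreeAlgebra.ι CC 0 = av := rfl
  rcases hi2 with rfl | rfl
  swap
  · -- i = 1 : left word starts with b
    have IH1 := IHn _ hlen u' (j :: v') rfl hu' hv
    constructor
    · rw [W_cons, hbv, hshb1, PS_bvmul, IH1.1, PS_bvmul]
      exact (opB_mul _ _).symm
    · intro _ _
      rw [W_cons, hbv, hshb1]
      rcases eq_or_ne u' [] with rfl | hne
      · rw [W_nil, hsh1]
        exact bv_W_mem hv
      · exact bvmul_spanTb _ (IH1.2 hne (List.cons_ne_nil _ _))
  have hj2 : j = 0 ∨ j = 1 := by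
    rcases j with ⟨jv, hjv⟩; interval_cases jv
    exacts [Or.inl rfl, Or.inr rfl]
  rcases hj2 with rfl | rfl
  swap
  · -- j = 1 : right word starts with b
    have IH1 := IHn _ hlen2 (0 :: u') v' rfl hu hv'
    constructor
    · rw [W_cons (1 : Fin 2), hbv, hshb2, PS_bvmul, IH1.1, PS_bvmul]
      exact (opB_mul' _ _).symm
    · intro _ _
      rw [W_cons (1 : Fin 2), hbv, hshb2]
      rcases eq_or_ne v' [] with rfl | hne
      · rw [W_nil, hsh2]
        exact bv_W_mem hu
      · exact bvmul_spanTb _ (IH1.2 (List.cons_ne_nil _ _) hne)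
  · -- i = j = 0
    have hneu : u' ≠ [] := Wd_cons_a_ne hu
    have hnev : v' ≠ [] := Wd_cons_a_ne hv
    have pa : ∀ w : List (Fin 2), PS q rho (W (0 :: w)) = opA q (PS q rho (W w)) := by
      intro w
      rw [show W ((0 : Fin 2) :: w) = av * W w from rfl, PS_avmul]
    have IHuv' := IHn _ hlen2 (0 :: u') v' rfl hu hv'
    have IHu'v := IHn _ hlen u' (0 :: v') rfl hu' hv
    have IHu'v' := IHn _ hlen3 u' v' rfl hu' hv'
    have hrule : sh (W ((0:Fin 2) :: u')) (W ((0:Fin 2) :: v'))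
        = av * (sh (W ((0:Fin 2) :: u')) (W v') + sh (W u') (W ((0:Fin 2) :: v'))
            + hb • sh (W u') (W v')) := by
      exact hshaa (W u') (W v')
    constructor
    · rw [hrule, PS_avmul, PS_add, PS_add, PS_smul, hrho,
        IHuv'.1, IHu'v.1, IHu'v'.1, pa, pa]
      exact (opA_mul_opA q hq _ _ (coeff_zero_PS_W q rho hneu) (coeff_zero_PS_W q rho hnev)).symm
    · intro _ _
      rw [hrule]
      refine avmul_spanTb _ (add_mem (add_mem ?_ ?_) (Submodule.smul_mem _ _ ?_))
      · exact IHuv'.2 (List.cons_ne_nil _ _) hnev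
      · exact IHu'v.2 hneu (List.cons_ne_nil _ _)
      · exact IHu'v'.2 hneu hnev

end mainsh


section bilin

variable (rho : CC →ₐ[ℚ] ℂ)

lemma spanTb_le_H1 : Submodule.span CC Tbset ≤ H1 :=
  le_trans (Submodule.span_mono Tbset_subset_Tset) (Submodule.span_le.mpr Tset_subset_H1)

lemma sh_main (hq : ‖q‖ < 1) (hrho : rho hb = 1 - q)
    (sh : H →ₗ[CC] H →ₗ[CC] H)
    (hsh1 : ∀ w : H, sh 1 w = w) (hsh2 : ∀ w : H, sh w 1 = w)
    (hshaa : ∀ w w' : H, sh (av * w) (av * w') =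
      av * (sh (av * w) w' + sh w (av * w') + hb • sh w w'))
    (hshb1 : ∀ w w' : H, sh (bv * w) w' = bv * sh w w')
    (hshb2 : ∀ w w' : H, sh w (bv * w') = bv * sh w w')
    (w w' : H) (hw : w ∈ H1) (hw' : w' ∈ H1) :
    sh w w' ∈ H1 ∧ PS q rho (sh w w') = PS q rho w * PS q rho w' := by
  have hws : w ∈ Submodule.span CC Tset := H1_le_spanT hw
  have hws' : w' ∈ Submodule.span CC Tset := H1_le_spanT hw'
  clear hw hw'
  induction hws, hws' using Submodule.span_induction₂ with
  | mem_mem x y hx hy =>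
      obtain ⟨u, hu, rfl⟩ := hx
      obtain ⟨v, hv, rfl⟩ := hy
      have hmain := main_sh q rho hq hrho sh hsh1 hsh2 hshaa hshb1 hshb2
        (u.length + v.length) u v rfl hu hv
      refine ⟨?_, hmain.1⟩
      rcases eq_or_ne u [] with rfl | hneu
      · rw [W_nil, hsh1]; exact W_mem_H1 hv
      rcases eq_or_ne v [] with rfl | hnev
      · rw [W_nil, hsh2]; exact W_mem_H1 hu
      · exact spanTb_le_H1 (hmain.2 hneu hnev)
  | zero_left y hy =>
      rw [map_zero, LinearMap.zero_apply]
      exact ⟨zero_mem _, by rw [PS_zero, zero_mul]⟩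
  | zero_right x hx =>
      rw [map_zero]
      exact ⟨zero_mem _, by rw [PS_zero, mul_zero]⟩
  | add_left x y z hx hy hz h1 h2 =>
      rw [map_add, LinearMap.add_apply]
      exact ⟨add_mem h1.1 h2.1, by rw [PS_add, PS_add, h1.2, h2.2, add_mul]⟩
  | add_right x y z hx hy hz h1 h2 =>
      rw [map_add]
      exact ⟨add_mem h1.1 h2.1, by rw [PS_add, PS_add, h1.2, h2.2, mul_add]⟩
  | smul_left r x y hx hy h =>
      rw [map_smul, LinearMap.smul_apply]
      exact ⟨Submodule.smul_mem _ _ h.1,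
        by rw [PS_smul, PS_smul, h.2, smul_mul_assoc]⟩
  | smul_right r x y hx hy h =>
      rw [map_smul]
      exact ⟨Submodule.smul_mem _ _ h.1,
        by rw [PS_smul, PS_smul, h.2, mul_smul_comm]⟩

end bilin


section analytic

variable (t : ℂ) (rho : CC →ₐ[ℚ] ℂ)

def dq (q : ℂ) : ℝ := (1 - ‖q‖) / ‖1 - q‖

lemma dq_pos (hq : ‖q‖ < 1) : 0 < dq q := by
  apply div_pos (by linarith)
  rw [norm_pos_iff]
  intro h
  exact one_sub_q_ne_zero q hq h

lemma norm_qint_ge (hq : ‖q‖ < 1) {m : ℕ} (hm : 1 ≤ m) : dq q ≤ ‖qint q m‖ := by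
  have h0 : (0:ℝ) < ‖1 - q‖ := by
    rw [norm_pos_iff]
    exact one_sub_q_ne_zero q hq
  rw [qint, norm_div]
  unfold dq
  gcongr
  have h1 : ‖q‖ ^ m ≤ ‖q‖ := pow_le_of_le_one (norm_nonneg _) hq.le (by omega)
  calc 1 - ‖q‖ ≤ ‖(1:ℂ)‖ - ‖q ^ m‖ := by rw [norm_pow, norm_one]; linarith
    _ ≤ ‖1 - q ^ m‖ := norm_sub_norm_le _ _

lemma norm_Fq_le (hq : ‖q‖ < 1) (k m : ℕ) :
    ‖Fq q k m‖ ≤ (max 1 (1 / dq q)) ^ (k + 1) := by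
  have hmax : (0:ℝ) ≤ max 1 (1 / dq q) := le_trans zero_le_one (le_max_left _ _)
  rcases Nat.eq_zero_or_pos m with rfl | hm
  · rw [Fq_at_zero, norm_zero]
    positivity
  have hd := dq_pos q hq
  have hqi := norm_qint_ge q hq hm
  have hqipos : 0 < ‖qint q m‖ := lt_of_lt_of_le hd hqi
  have hq1 : ‖q‖ ≤ 1 := hq.le
  cases k with
  | zero =>
      rw [Fq_zero_eq, norm_div, norm_pow]
      calc ‖q‖ ^ m / ‖qint q m‖ ≤ 1 / dq q := by
            apply div_le_div₀ (by positivity) (pow_le_one₀ (norm_nonneg _) hq1) hd hqi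
        _ ≤ max 1 (1 / dq q) := le_max_right _ _
        _ ≤ (max 1 (1 / dq q)) ^ (0 + 1) := by rw [pow_one]
  | succ k =>
      rw [Fq_succ_def, norm_div, norm_pow, norm_pow]
      calc ‖q‖ ^ (k * m) / ‖qint q m‖ ^ (k + 1) ≤ 1 / dq q ^ (k + 1) := by
            apply div_le_div₀ (by positivity) (pow_le_one₀ (norm_nonneg _) hq1)
              (by positivity) (pow_le_pow_left₀ hd.le hqi _)
        _ = (1 / dq q) ^ (k + 1) := by rw [div_pow, one_pow]
        _ ≤ (max 1 (1 / dq q)) ^ (k + 1 + 1 - 1) := by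
            apply pow_le_pow_left₀ (by positivity) (le_max_right _ _)
        _ ≤ (max 1 (1 / dq q)) ^ (k + 1 + 1) := by
            apply pow_le_pow_right₀ (le_max_left _ _)
            omega

def bf (q : ℂ) (k : ℕ) : ℝ := (max 1 (1 / dq q)) ^ (k + 1)

lemma bf_nonneg (k : ℕ) : 0 ≤ bf q k :=
  pow_nonneg (le_trans zero_le_one (le_max_left _ _)) _

lemma one_le_bf (k : ℕ) : 1 ≤ bf q k := by
  have h := pow_le_pow_left₀ zero_le_one (le_max_left 1 (1 / dq q)) (k + 1)
  unfold bf
  rwa [one_pow] at h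

lemma cE_bound (hq : ‖q‖ < 1) (l : List ℕ) :
    ∃ C : ℝ, 0 ≤ C ∧ ∀ m : ℕ, ‖cE q l m‖ ≤ C * ((m : ℝ) + 1) ^ l.length := by
  induction l with
  | nil =>
      refine ⟨1, zero_le_one, fun m => ?_⟩
      show ‖(if m = 0 then (1:ℂ) else 0)‖ ≤ _
      split_ifs <;> simp
  | cons k l ih =>
      obtain ⟨C, hC, hIH⟩ := ih
      refine ⟨bf q k * C, mul_nonneg (bf_nonneg q k) hC, fun m => ?_⟩
      show ‖Fq q k m * ∑ j ∈ Finset.range m, cE q l j‖ ≤ _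
      rw [norm_mul]
      have h1 : ‖∑ j ∈ Finset.range m, cE q l j‖ ≤ (m : ℝ) * (C * ((m : ℝ) + 1) ^ l.length) := by
        refine le_trans (norm_sum_le _ _) ?_
        have : ∀ j ∈ Finset.range m, ‖cE q l j‖ ≤ C * ((m : ℝ) + 1) ^ l.length := by
          intro j hj
          refine le_trans (hIH j) ?_
          apply mul_le_mul_of_nonneg_left ?_ hC
          apply pow_le_pow_left₀ (by positivity)
          have h2 := Finset.mem_range.mp hj
          have h3 : (j : ℝ) < (m : ℝ) := by exact_mod_cast h2
          linarith
        calc ∑ j ∈ Finset.range m, ‖cE q l j‖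
            ≤ ∑ _j ∈ Finset.range m, C * ((m : ℝ) + 1) ^ l.length :=
              Finset.sum_le_sum this
          _ = (m : ℝ) * (C * ((m : ℝ) + 1) ^ l.length) := by
              rw [Finset.sum_const, Finset.card_range, nsmul_eq_mul]
      calc ‖Fq q k m‖ * ‖∑ j ∈ Finset.range m, cE q l j‖
          ≤ bf q k * ((m : ℝ) * (C * ((m : ℝ) + 1) ^ l.length)) := by
            apply mul_le_mul (norm_Fq_le q hq k m) h1 (norm_nonneg _) (bf_nonneg q k)
        _ ≤ bf q k * C * ((m : ℝ) + 1) ^ (l.length + 1) := by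
            rw [pow_succ]
            have hm1 : (0:ℝ) ≤ (m:ℝ) + 1 := by positivity
            have : (m : ℝ) * (C * ((m : ℝ) + 1) ^ l.length)
                ≤ C * (((m : ℝ) + 1) ^ l.length * ((m:ℝ) + 1)) := by
              nlinarith [pow_nonneg hm1 l.length, hC]
            nlinarith [bf_nonneg q k, one_le_bf q k, pow_nonneg hm1 l.length, hC]
        _ = _ := by rw [List.length_cons]

lemma summable_poly_geom {r : ℝ} (hr : 0 ≤ r) (hr1 : r < 1) (d : ℕ) :
    Summable (fun m : ℕ => ((m : ℝ) + 1) ^ d * r ^ m) := by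
  rcases eq_or_lt_of_le hr with rfl | hr0
  · apply summable_of_ne_finset_zero (s := {0})
    intro m hm
    simp only [Finset.mem_singleton] at hm
    rw [zero_pow hm, mul_zero]
  · have h1 : Summable (fun n : ℕ => (n : ℝ) ^ d * r ^ n) :=
      summable_pow_mul_geometric_of_norm_lt_one d (by rwa [Real.norm_eq_abs, abs_of_nonneg hr])
    have h2 := h1.comp_injective Nat.succ_injective
    have h3 := h2.mul_left (1 / r)
    apply h3.congr
    intro m
    show 1 / r * ((fun n : ℕ => (n : ℝ) ^ d * r ^ n) (m + 1)) = _
    have : ((m + 1 : ℕ) : ℝ) = (m : ℝ) + 1 := by push_cast; ring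
    simp only [this]
    rw [pow_succ]
    field_simp

lemma abs_sum_cE (hq : ‖q‖ < 1) (ht : ‖t‖ < 1) (l : List ℕ) :
    Summable (fun m : ℕ => ‖cE q l m‖ * ‖t‖ ^ m) := by
  obtain ⟨C, hC, hb⟩ := cE_bound q hq l
  apply Summable.of_nonneg_of_le (fun m => by positivity)
    (f := fun m : ℕ => C * (((m : ℝ) + 1) ^ l.length * ‖t‖ ^ m))
  · intro m
    have := mul_le_mul_of_nonneg_right (hb m) (pow_nonneg (norm_nonneg t) m)
    calc ‖cE q l m‖ * ‖t‖ ^ m ≤ C * ((m : ℝ) + 1) ^ l.length * ‖t‖ ^ m := this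
      _ = C * (((m : ℝ) + 1) ^ l.length * ‖t‖ ^ m) := by ring
  · exact (summable_poly_geom (norm_nonneg t) ht l.length).mul_left C

def Ev (f : PowerSeries ℂ) : ℂ := ∑' m : ℕ, PowerSeries.coeff m f * t ^ m

def AbsS (f : PowerSeries ℂ) : Prop :=
  Summable (fun m : ℕ => ‖PowerSeries.coeff m f‖ * ‖t‖ ^ m)

lemma AbsS.norm_summable {f : PowerSeries ℂ} (h : AbsS t f) :
    Summable (fun m : ℕ => ‖PowerSeries.coeff m f * t ^ m‖) := by
  unfold AbsS at h
  apply h.congr; intro m; rw [norm_mul, norm_pow]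

lemma AbsS.summable {f : PowerSeries ℂ} (h : AbsS t f) :
    Summable (fun m : ℕ => PowerSeries.coeff m f * t ^ m) :=
  (AbsS.norm_summable t h).of_norm

lemma AbsS_add {f g : PowerSeries ℂ} (hf : AbsS t f) (hg : AbsS t g) : AbsS t (f + g) := by
  unfold AbsS at *
  apply Summable.of_nonneg_of_le (fun m => by positivity)
    (f := fun m : ℕ => ‖PowerSeries.coeff m f‖ * ‖t‖ ^ m + ‖PowerSeries.coeff m g‖ * ‖t‖ ^ m)
  · intro m
    rw [map_add, ← add_mul]
    apply mul_le_mul_of_nonneg_right (norm_add_le _ _) (by positivity)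
  · exact hf.add hg

lemma Ev_add {f g : PowerSeries ℂ} (hf : AbsS t f) (hg : AbsS t g) :
    Ev t (f + g) = Ev t f + Ev t g := by
  unfold Ev
  rw [← Summable.tsum_add (AbsS.summable t hf) (AbsS.summable t hg)]
  apply tsum_congr; intro m; rw [map_add, add_mul]

lemma AbsS_smul (c : ℂ) {f : PowerSeries ℂ} (hf : AbsS t f) : AbsS t (c • f) := by
  unfold AbsS at *
  apply (hf.mul_left ‖c‖).congr
  intro m
  rw [map_smul, smul_eq_mul, norm_mul]
  ring

lemma Ev_smul (c : ℂ) (f : PowerSeries ℂ) : Ev t (c • f) = c * Ev t f := by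
  unfold Ev
  rw [← tsum_mul_left]
  apply tsum_congr; intro m; rw [map_smul, smul_eq_mul]; ring

lemma Ev_mul {f g : PowerSeries ℂ} (hf : AbsS t f) (hg : AbsS t g) :
    Ev t (f * g) = Ev t f * Ev t g := by
  unfold Ev
  rw [tsum_mul_tsum_eq_tsum_sum_antidiagonal_of_summable_norm
    (AbsS.norm_summable t hf) (AbsS.norm_summable t hg)]
  apply tsum_congr; intro n
  rw [PowerSeries.coeff_mul, Finset.sum_mul]
  apply Finset.sum_congr rfl
  intro kl hkl
  have : kl.1 + kl.2 = n := Finset.HasAntidiagonal.mem_antidiagonal.mp hkl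
  rw [← this, pow_add]
  ring

end analytic


section bigsum

open scoped Classical

def Cnd {n : ℕ} (m : ℕ) (g : Fin n → ℕ) : Prop :=
  StrictAnti (Fin.cons m g : Fin (n + 1) → ℕ) ∧
    ∀ i : Fin (n + 1), 0 < (Fin.cons m g : Fin (n + 1) → ℕ) i

lemma strictAnti_cons_iff {n : ℕ} {x : ℕ} {f : Fin n → ℕ} :
    StrictAnti (Fin.cons x f : Fin (n + 1) → ℕ) ↔ StrictAnti f ∧ ∀ i, f i < x := by
  constructor
  · intro h
    constructor
    · intro i j hij
      have h2 := h (show (i.succ : Fin (n+1)) < j.succ from by rwa [Fin.succ_lt_succ_iff])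
      simpa using h2
    · intro i
      have h2 := h (show (0 : Fin (n+1)) < i.succ from i.succ_pos)
      simpa using h2
  · rintro ⟨hf, hx⟩ a b hab
    induction b using Fin.cases with
    | zero => exact absurd hab (Fin.not_lt_zero _)
    | succ j =>
        induction a using Fin.cases with
        | zero => simpa using hx j
        | succ i =>
            have hij : i < j := by rwa [Fin.succ_lt_succ_iff] at hab
            simpa using hf hij

lemma pos_cons_iff {n : ℕ} {x : ℕ} {f : Fin n → ℕ} :
    (∀ i : Fin (n+1), 0 < (Fin.cons x f : Fin (n + 1) → ℕ) i) ↔ 0 < x ∧ ∀ i, 0 < f i := by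
  rw [Fin.forall_fin_succ]
  simp

lemma Cnd_iff {n m : ℕ} {g : Fin n → ℕ} :
    Cnd m g ↔ (StrictAnti g ∧ ∀ i, 0 < g i) ∧ (∀ i, g i < m) ∧ 0 < m := by
  unfold Cnd
  rw [strictAnti_cons_iff, pos_cons_iff]
  tauto

variable (q : ℂ)

def SDfun (l : List ℕ) (m : ℕ) : ℂ :=
  ∑ g ∈ Fintype.piFinset (fun _ : Fin l.length => Finset.range m),
    if Cnd m g then ∏ i : Fin l.length, Fq q (l.get i) (g i) else 0

lemma piFinset_fin_zero (m : ℕ) :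
    Fintype.piFinset (fun _ : Fin 0 => Finset.range m) = Finset.univ := by
  ext g
  simp [Fintype.mem_piFinset]

lemma Cnd_zero_iff (m : ℕ) (g : Fin 0 → ℕ) : Cnd m g ↔ 0 < m := by
  rw [Cnd_iff]
  constructor
  · rintro ⟨_, _, h⟩; exact h
  · intro h
    refine ⟨⟨fun a => a.elim0, fun i => i.elim0⟩, fun i => i.elim0, h⟩

lemma SD_nil (m : ℕ) : SDfun q [] m = if m = 0 then 0 else 1 := by
  unfold SDfun
  show (∑ g ∈ Fintype.piFinset (fun _ : Fin 0 => Finset.range m),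
      if Cnd m g then ∏ i : Fin 0, Fq q (([] : List ℕ).get i) (g i) else 0) = _
  rw [piFinset_fin_zero, Finset.sum_eq_single_of_mem (fun _ => 0) (Finset.mem_univ _)
    (fun b _ hb => absurd (Subsingleton.elim b _) hb), Cnd_zero_iff]
  rcases Nat.eq_zero_or_pos m with rfl | hm
  · rw [if_neg (lt_irrefl 0), if_pos rfl]
  · rw [if_pos hm, if_neg (by omega)]
    simp

lemma prod_Fq_cons (k : ℕ) (l : List ℕ) (j : ℕ) (g : Fin l.length → ℕ) :
    (∏ i : Fin (l.length + 1), Fq q ((k :: l).get i) ((Fin.cons j g : Fin (l.length + 1) → ℕ) i))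
      = Fq q k j * ∏ i : Fin l.length, Fq q (l.get i) (g i) := by
  rw [Fin.prod_univ_succ]
  simp

lemma Cnd_cons_iff {n : ℕ} {m j : ℕ} {g : Fin n → ℕ} (hjm : j < m) :
    Cnd m (Fin.cons j g : Fin (n+1) → ℕ) ↔ Cnd j g := by
  rw [Cnd_iff]
  constructor
  · rintro ⟨⟨h1, h2⟩, _, _⟩
    exact ⟨h1, h2⟩
  · rintro ⟨h1, h2⟩
    refine ⟨⟨h1, h2⟩, ?_, by omega⟩
    intro i
    induction i using Fin.cases with
    | zero => simpa using hjm
    | succ i =>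
        have hgi : g i < j := (strictAnti_cons_iff.mp h1).2 i
        simpa using lt_trans hgi hjm

lemma Cnd_forces_lt {n : ℕ} {j : ℕ} {g : Fin n → ℕ} (h : Cnd j g) (i : Fin n) : g i < j :=
  (Cnd_iff.mp h).2.1 i

lemma inner_sum (k : ℕ) (l : List ℕ) {j m : ℕ} (hjm : j < m) :
    (∑ g ∈ Fintype.piFinset (fun _ : Fin l.length => Finset.range m),
      if Cnd m (Fin.cons j g : Fin (l.length + 1) → ℕ)
      then ∏ i : Fin (l.length + 1), Fq q ((k :: l).get i)
        ((Fin.cons j g : Fin (l.length + 1) → ℕ) i) else 0)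
      = Fq q k j * SDfun q l j := by
  have step1 : ∀ g : Fin l.length → ℕ,
      (if Cnd m (Fin.cons j g : Fin (l.length + 1) → ℕ)
        then ∏ i : Fin (l.length + 1), Fq q ((k :: l).get i)
          ((Fin.cons j g : Fin (l.length + 1) → ℕ) i) else 0)
      = Fq q k j * (if Cnd j g then ∏ i : Fin l.length, Fq q (l.get i) (g i) else 0) := by
    intro g
    rw [mul_ite, mul_zero]
    apply if_congr (Cnd_cons_iff hjm) (prod_Fq_cons q k l j g) rfl
  rw [Finset.sum_congr rfl (fun g _ => step1 g), ← Finset.mul_sum]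
  congr 1
  unfold SDfun
  apply (Finset.sum_subset (Fintype.piFinset_subset _ _
    (fun _ => Finset.range_subset_range.mpr (le_of_lt hjm))) ?_).symm
  intro g hgm hgj
  rw [if_neg]
  intro hc
  apply hgj
  rw [Fintype.mem_piFinset]
  intro i
  rw [Finset.mem_range]
  exact Cnd_forces_lt hc i

lemma SD_cons (k : ℕ) (l : List ℕ) (m : ℕ) :
    SDfun q (k :: l) m = ∑ j ∈ Finset.range m, Fq q k j * SDfun q l j := by
  rw [show ∑ j ∈ Finset.range m, Fq q k j * SDfun q l j
      = ∑ j ∈ Finset.range m, ∑ g ∈ Fintype.piFinset (fun _ : Fin l.length => Finset.range m),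
          (if Cnd m (Fin.cons j g : Fin (l.length + 1) → ℕ)
            then ∏ i : Fin (l.length + 1), Fq q ((k :: l).get i)
              ((Fin.cons j g : Fin (l.length + 1) → ℕ) i) else 0) from by
    apply Finset.sum_congr rfl
    intro j hj
    exact (inner_sum q k l (Finset.mem_range.mp hj)).symm]
  unfold SDfun
  show (∑ g ∈ Fintype.piFinset (fun _ : Fin (l.length + 1) => Finset.range m),
      if Cnd m g then ∏ i : Fin (l.length + 1), Fq q ((k :: l).get i) (g i) else 0) = _
  rw [← Finset.sum_product']
  apply Finset.sum_nbij' (i := fun g => (g 0, Fin.tail g)) (j := fun p => Fin.cons p.1 p.2)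
  · intro g hg
    rw [Finset.mem_product]
    rw [Fintype.mem_piFinset] at hg
    constructor
    · exact hg 0
    · rw [Fintype.mem_piFinset]; intro i; exact hg i.succ
  · intro p hp
    rw [Finset.mem_product] at hp
    rw [Fintype.mem_piFinset]
    intro i
    induction i using Fin.cases with
    | zero => simpa using hp.1
    | succ i => have := Fintype.mem_piFinset.mp hp.2 i; simpa using this
  · intro g _; exact Fin.cons_self_tail g
  · intro p _; simp
  · intro g _
    rw [Fin.cons_self_tail]

end bigsum


section bigsum2

open scoped Classical

variable (q t : ℂ)

lemma SD_eq (l : List ℕ) : ∀ m, SDfun q l m = ∑ j ∈ Finset.range m, cE q l j := by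
  induction l with
  | nil =>
      intro m
      rw [SD_nil]
      rw [show ∑ j ∈ Finset.range m, cE q [] j
          = ∑ j ∈ Finset.range m, if j = 0 then (1:ℂ) else 0 from rfl]
      rw [Finset.sum_ite_eq' (Finset.range m) 0 (fun _ => (1:ℂ))]
      rcases Nat.eq_zero_or_pos m with rfl | hm
      · simp
      · rw [if_neg (by omega), if_pos (Finset.mem_range.mpr hm)]
  | cons k l ih =>
      intro m
      rw [SD_cons]
      apply Finset.sum_congr rfl
      intro j hj
      rw [ih j]
      rfl

lemma Lval_nil : Lval q t [] = 1 := by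
  rw [Lval]
  have hx : {f : Fin (List.length ([] : List ℕ)) → ℕ // StrictAnti f ∧ ∀ i, 0 < f i} :=
    ⟨fun i => i.elim0, ⟨fun a _ _ => a.elim0, fun i => i.elim0⟩⟩
  rw [tsum_eq_single hx (fun b hb => absurd (Subtype.ext (funext fun i => i.elim0)) hb)]
  rw [dif_neg (by simp)]
  rw [one_mul]
  haveI : IsEmpty (Fin (List.length ([] : List ℕ))) := ⟨fun i => Fin.elim0 i⟩
  exact Finset.prod_of_isEmpty _

lemma cE_tsum_nil : ∑' m : ℕ, cE q [] m * t ^ m = 1 := by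
  rw [tsum_eq_single 0 (fun m hm => by
    rw [show cE q [] m = if m = 0 then 1 else 0 from rfl, if_neg hm, zero_mul])]
  rw [show cE q [] 0 = if 0 = 0 then (1:ℂ) else 0 from rfl, if_pos rfl, pow_zero, one_mul]

lemma Lval_cons (hq : ‖q‖ < 1) (ht : ‖t‖ < 1) (k : ℕ) (l : List ℕ) :
    Lval q t (k :: l) = ∑' m : ℕ, cE q (k :: l) m * t ^ m := by
  set n := l.length with hn
  set F : (Fin (n + 1) → ℕ) → ℂ := fun f =>
    t ^ f 0 * ∏ i : Fin (n + 1), Fq q ((k :: l).get i) (f i) with hF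
  set S : Set (Fin (n + 1) → ℕ) := {f | StrictAnti f ∧ ∀ i, 0 < f i} with hSdef
  have hmemS : ∀ (j : ℕ) (g : Fin n → ℕ),
      (Fin.cons j g : Fin (n+1) → ℕ) ∈ S ↔ Cnd j g := fun j g => Iff.rfl
  -- bounds
  set CB : ℝ := bf q k * ∏ i : Fin n, bf q (l.get i) with hCB
  have hCB0 : 0 ≤ CB := by
    apply mul_nonneg (bf_nonneg q k)
    exact Finset.prod_nonneg fun i _ => bf_nonneg q _
  have hFbound : ∀ f : Fin (n+1) → ℕ, ‖F f‖ ≤ ‖t‖ ^ (f 0) * CB := by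
    intro f
    rw [hF]
    simp only [norm_mul, norm_pow]
    apply mul_le_mul_of_nonneg_left ?_ (by positivity)
    rw [norm_prod, Fin.prod_univ_succ, hCB]
    apply mul_le_mul ?_ ?_ (Finset.prod_nonneg fun i _ => norm_nonneg _) (bf_nonneg q k)
    · rw [show (k :: l).get (0 : Fin (n+1)) = k from by simp]
      exact norm_Fq_le q hq k (f 0)
    · apply Finset.prod_le_prod (fun i _ => norm_nonneg _) (fun i _ => ?_)
      rw [show (k :: l).get (Fin.succ i) = l.get i from by simp]
      exact norm_Fq_le q hq _ _
  set Gn : ℕ × (Fin n → ℕ) → ℝ := fun p => ‖S.indicator F (Fin.cons p.1 p.2)‖ with hGn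
  have hGn_zero : ∀ (j : ℕ) (g : Fin n → ℕ),
      g ∉ Fintype.piFinset (fun _ : Fin n => Finset.range j) →
      S.indicator F (Fin.cons j g) = 0 := by
    intro j g hg
    apply Set.indicator_of_notMem
    rw [hmemS]
    intro hc
    apply hg
    rw [Fintype.mem_piFinset]
    intro i
    rw [Finset.mem_range]
    exact Cnd_forces_lt hc i
  have hGn_le : ∀ (j : ℕ) (g : Fin n → ℕ), Gn (j, g) ≤ ‖t‖ ^ j * CB := by
    intro j g
    calc ‖S.indicator F (Fin.cons j g)‖ ≤ ‖F (Fin.cons j g)‖ :=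
          norm_indicator_le_norm_self F _
      _ ≤ ‖t‖ ^ ((Fin.cons j g : Fin (n+1) → ℕ) 0) * CB := hFbound _
      _ = ‖t‖ ^ j * CB := by rw [Fin.cons_zero]
  have hfiber : ∀ j, Summable (fun g : Fin n → ℕ => Gn (j, g)) := by
    intro j
    apply summable_of_ne_finset_zero
      (s := Fintype.piFinset (fun _ : Fin n => Finset.range j))
    intro g hg
    show ‖S.indicator F (Fin.cons j g)‖ = 0
    rw [hGn_zero j g hg, norm_zero]
  have houter0 : ∀ j : ℕ, ∑' g : Fin n → ℕ, Gn (j, g) ≤ CB * (((j:ℝ)+1)^n * ‖t‖^j) := by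
    intro j
    rw [tsum_eq_sum (s := Fintype.piFinset (fun _ : Fin n => Finset.range j))
      (fun g hg => by show ‖S.indicator F (Fin.cons j g)‖ = 0; rw [hGn_zero j g hg, norm_zero])]
    calc ∑ g ∈ Fintype.piFinset (fun _ : Fin n => Finset.range j), Gn (j, g)
        ≤ (Fintype.piFinset (fun _ : Fin n => Finset.range j)).card • (‖t‖ ^ j * CB) :=
          Finset.sum_le_card_nsmul _ _ _ (fun g _ => hGn_le j g)
      _ = ((Fintype.piFinset (fun _ : Fin n => Finset.range j)).card : ℝ) * (‖t‖ ^ j * CB) :=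
          nsmul_eq_mul _ _
      _ ≤ CB * (((j:ℝ)+1)^n * ‖t‖^j) := by
          rw [Fintype.card_piFinset]
          simp only [Finset.card_range, Finset.prod_const, Finset.card_univ, Fintype.card_fin]
          push_cast
          rw [show CB * (((j:ℝ)+1)^n * ‖t‖^j) = ((j:ℝ)+1)^n * (‖t‖^j * CB) from by ring]
          apply mul_le_mul_of_nonneg_right ?_ (by positivity)
          exact pow_le_pow_left₀ (by positivity) (by linarith) n
  have houter : Summable (fun j : ℕ => ∑' g : Fin n → ℕ, Gn (j, g)) := by
    apply Summable.of_nonneg_of_le (fun j => tsum_nonneg (fun g => norm_nonneg _)) houter0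
    exact ((summable_poly_geom (norm_nonneg t) ht n).mul_left CB).congr (fun j => by ring)
  have hGsum : Summable Gn :=
    (summable_prod_of_nonneg (fun p => norm_nonneg _)).mpr ⟨hfiber, houter⟩
  have hsum : Summable (fun p : ℕ × (Fin n → ℕ) => S.indicator F (Fin.cons p.1 p.2)) :=
    Summable.of_norm hGsum
  -- main computation
  have stepA : Lval q t (k :: l) = ∑' (x : ↥S), F ↑x := by
    rw [Lval]
    apply tsum_congr
    intro x
    rw [dif_pos (show 0 < (k :: l).length from Nat.succ_pos _)]
    rw [hF]
    simp only [Fin.mk_zero]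
    rfl
  rw [stepA, tsum_subtype S F]
  rw [← (Fin.consEquiv (fun _ : Fin (n+1) => ℕ)).tsum_eq (S.indicator F)]
  have hce : ∀ p : ℕ × (Fin n → ℕ),
      S.indicator F ((Fin.consEquiv (fun _ : Fin (n+1) => ℕ)) p)
        = S.indicator F (Fin.cons p.1 p.2) := by
    intro p; rfl
  rw [tsum_congr hce]
  rw [Summable.tsum_prod' hsum (fun j => (hfiber j).of_norm)]
  apply tsum_congr
  intro j
  rw [tsum_eq_sum (s := Fintype.piFinset (fun _ : Fin n => Finset.range j))
    (fun g hg => hGn_zero j g hg)]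
  have hterm : ∀ g : Fin n → ℕ, g ∈ Fintype.piFinset (fun _ : Fin n => Finset.range j) →
      S.indicator F (Fin.cons j g)
        = (t ^ j * Fq q k j) * (if Cnd j g then ∏ i : Fin n, Fq q (l.get i) (g i) else 0) := by
    intro g _
    rw [Set.indicator_apply]
    rw [if_congr (hmemS j g) rfl rfl]
    rw [mul_ite, mul_zero]
    apply if_congr Iff.rfl ?_ rfl
    rw [hF]
    show t ^ ((Fin.cons j g : Fin (n+1) → ℕ) 0) *
        ∏ i : Fin (n+1), Fq q ((k :: l).get i) ((Fin.cons j g : Fin (n+1) → ℕ) i) = _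
    rw [Fin.cons_zero, prod_Fq_cons q k l j g]
    ring
  rw [Finset.sum_congr rfl hterm, ← Finset.mul_sum]
  rw [show (∑ g ∈ Fintype.piFinset (fun _ : Fin n => Finset.range j),
      if Cnd j g then ∏ i : Fin n, Fq q (l.get i) (g i) else 0) = SDfun q l j from rfl]
  rw [SD_eq]
  rw [show cE q (k :: l) j = Fq q k j * ∑ i ∈ Finset.range j, cE q l i from rfl]
  ring

end bigsum2


section final

variable (q t : ℂ) (rho : CC →ₐ[ℚ] ℂ)

lemma Lval_eq (hq : ‖q‖ < 1) (ht : ‖t‖ < 1) (l : List ℕ) :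
    Lval q t l = ∑' m : ℕ, cE q l m * t ^ m := by
  cases l with
  | nil => rw [Lval_nil, cE_tsum_nil]
  | cons k l => exact Lval_cons q t hq ht k l

lemma L_eq_Ev (hq : ‖q‖ < 1) (ht : ‖t‖ < 1) (hrho : rho hb = 1 - q) (L : H →+ ℂ)
    (hLs : ∀ (c : CC) (x : H), L (c • x) = rho c * L x)
    (hLe : ∀ l : List ℕ, L (eword l) = Lval q t l) :
    ∀ x, x ∈ H1 → L x = Ev t (PS q rho x) ∧ AbsS t (PS q rho x) := by
  intro x hx
  induction hx using Submodule.span_induction with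
  | mem y hy =>
      obtain ⟨l, rfl⟩ := hy
      constructor
      · rw [hLe, Lval_eq q t hq ht l]
        apply tsum_congr; intro m
        rw [PS_eword q rho hq hrho]
      · apply (abs_sum_cE q t hq ht l).congr
        intro m
        rw [PS_eword q rho hq hrho]
  | zero =>
      rw [map_zero, PS_zero]
      constructor
      · rw [show Ev t 0 = 0 from by unfold Ev; simp]
      · show Summable _
        apply summable_zero.congr
        intro m; simp
  | add x y hx hy h1 h2 =>
      rw [map_add, PS_add]
      exact ⟨by rw [Ev_add t h1.2 h2.2, h1.1, h2.1], AbsS_add t h1.2 h2.2⟩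
  | smul c x hx h =>
      rw [hLs, PS_smul]
      exact ⟨by rw [Ev_smul, h.1], AbsS_smul t _ h.2⟩


end final

end ShuffleAux

/-- For `|q| < 1`, `w, w' ∈ Ĥ¹` and `|t| < 1`,
`L_{w ⧢_q w'}(t) = L_w(t) · L_{w'}(t)`. -/
theorem shuffle_relation_L (q : ℂ) (hq : ‖q‖ < 1)
    (t : ℂ) (ht : ‖t‖ < 1)
    (sh : H →ₗ[CC] H →ₗ[CC] H) (hsh : IsShuffle sh)
    (ρ : CC →ₐ[ℚ] ℂ) (hρ : ρ hb = 1 - q)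
    (L : H →+ ℂ) (hL : IsLmap ρ q t L)
    (w w' : H) (hw : w ∈ H1) (hw' : w' ∈ H1) :
    L (sh w w') = L w * L w' := by
  obtain ⟨h1, h2, h3, h4, h5⟩ := hsh
  obtain ⟨hLs, hLe⟩ := hL
  have hq' : ‖q‖ < 1 := by exact hq
  have ht' : ‖t‖ < 1 := by exact ht
  have hmain := ShuffleAux.sh_main q ρ hq' hρ sh h1 h2 h3 h4 h5 w w' hw hw'
  have hw1 := ShuffleAux.L_eq_Ev q t ρ hq' ht' hρ L hLs hLe w hw
  have hw2 := ShuffleAux.L_eq_Ev q t ρ hq' ht' hρ L hLs hLe w' hw'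
  have hsh1 := ShuffleAux.L_eq_Ev q t ρ hq' ht' hρ L hLs hLe _ hmain.1
  rw [hsh1.1, hmain.2, ShuffleAux.Ev_mul t hw1.2 hw2.2, ← hw1.1, ← hw2.1]

end
end

section
/- In the formal power series ring H[[X]] one has ψ(X) = log_{⧢_q}(1/(1 − e_{1̄}X)), where ψ(X) = (1/ℏ)·a·log(1 + ℏbX) = Σ_{n≥1} ((−1)^{n−1}/n) ℏ^{n−1} a b^n X^n and 1/(1 − e_{1̄}X) = Σ_{n≥0} e_{1̄}^n X^n. -/
noncomputable section

/-- The `𝒞[[X]]`-bilinear extension to `H[[X]]` of a `𝒞`-bilinear product `m` on `H`. -/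
def extMul (m : H →ₗ[CC] H →ₗ[CC] H) (f g : PowerSeries H) : PowerSeries H :=
  PowerSeries.mk fun N =>
    ∑ p ∈ Finset.HasAntidiagonal.antidiagonal N, m (PowerSeries.coeff (R := H) p.1 f) (PowerSeries.coeff (R := H) p.2 g)

/-- `n`-fold power with respect to the product `extMul m`, with `f^1 = f`. -/
def itpow (m : H →ₗ[CC] H →ₗ[CC] H) (f : PowerSeries H) : ℕ → PowerSeries H
  | 0 => 1
  | 1 => f
  | (n+2) => extMul m f (itpow m f (n+1))

/-- `log_m (1 + f) = Σ_{n≥1} ((−1)^{n−1}/n) f^{m n}`, defined coefficientwise (for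
`f ∈ X·H[[X]]` the sum over `n` contributing to the `N`-th coefficient is finite,
namely `1 ≤ n ≤ N`). -/
def serlog (m : H →ₗ[CC] H →ₗ[CC] H) (f : PowerSeries H) : PowerSeries H :=
  PowerSeries.mk fun N =>
    ∑ n ∈ Finset.Icc 1 N, qs ((-1 : ℚ) ^ (n - 1) / (n : ℚ)) • PowerSeries.coeff (R := H) N (itpow m f n)

/-- The geometric series `1/(1 − e_{1̄}X) = Σ_{n≥0} e_{1̄}^n X^n`. -/
def geom : PowerSeries H := PowerSeries.mk fun n => (av * bv) ^ n

/-- The series `e_{1̄} X`. -/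
def e1X : PowerSeries H := PowerSeries.mk fun n => if n = 1 then av * bv else 0

/-- `ψ(X) = (1/ℏ)·a·log(1 + ℏbX) = Σ_{n≥1} ((−1)^{n−1}/n) ℏ^{n−1} a b^n X^n`. -/
def psiS : PowerSeries H := PowerSeries.mk fun n =>
  if n = 0 then 0 else (qs ((-1 : ℚ) ^ (n - 1) / (n : ℚ)) * hb ^ (n - 1)) • (av * bv ^ n)

/-- `φ(X) = (log(1 + aX))·b = Σ_{n≥1} ((−1)^{n−1}/n) a^n b X^n`. -/
def phiS : PowerSeries H := PowerSeries.mk fun n =>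
  if n = 0 then 0 else qs ((-1 : ℚ) ^ (n - 1) / (n : ℚ)) • (av ^ n * bv)

/-- `log(1 + ℏbX) = Σ_{n≥1} ((−1)^{n−1}/n) ℏ^n b^n X^n`. -/
def lgS : PowerSeries H := PowerSeries.mk fun n =>
  if n = 0 then 0 else (qs ((-1 : ℚ) ^ (n - 1) / (n : ℚ)) * hb ^ n) • (bv ^ n)


set_option maxHeartbeats 1000000

namespace QSh

def wrd (l : List (Fin 2)) : H := (l.map (FreeAlgebra.ι CC)).prod

@[simp] lemma wrd_nil : wrd [] = 1 := rfl

lemma wrd_cons (i : Fin 2) (l : List (Fin 2)) :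
    wrd (i :: l) = FreeAlgebra.ι CC i * wrd l := rfl

lemma wrd_cons0 (l : List (Fin 2)) : wrd (0 :: l) = av * wrd l := rfl
lemma wrd_cons1 (l : List (Fin 2)) : wrd (1 :: l) = bv * wrd l := rfl

lemma wrd_span (x : H) : x ∈ Submodule.span CC (Set.range wrd) := by
  induction x using FreeAlgebra.induction with
  | grade0 r =>
      have : (algebraMap CC H r) = r • wrd [] := by
        simp [Algebra.algebraMap_eq_smul_one]
      rw [this]
      exact Submodule.smul_mem _ _ (Submodule.subset_span ⟨[], rfl⟩)
  | grade1 i =>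
      have : FreeAlgebra.ι CC i = wrd [i] := by simp [wrd_cons]
      rw [this]; exact Submodule.subset_span ⟨[i], rfl⟩
  | mul a b ha hb =>
      refine Submodule.span_induction ?_ ?_ ?_ ?_ ha
      · rintro x ⟨lx, rfl⟩
        refine Submodule.span_induction ?_ ?_ ?_ ?_ hb
        · rintro y ⟨ly, rfl⟩
          have : wrd lx * wrd ly = wrd (lx ++ ly) := by
            simp [wrd, List.prod_append]
          rw [this]; exact Submodule.subset_span ⟨_, rfl⟩
        · simp
        · intro y z _ _ hy hz; rw [mul_add]; exact Submodule.add_mem _ hy hz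
        · intro c y _ hy; rw [mul_smul_comm]; exact Submodule.smul_mem _ _ hy
      · simp
      · intro x y _ _ hx hy; rw [add_mul]; exact Submodule.add_mem _ hx hy
      · intro c x _ hx; rw [smul_mul_assoc]; exact Submodule.smul_mem _ _ hx
  | add a b ha hb => exact Submodule.add_mem _ ha hb

variable {sh : H →ₗ[CC] H →ₗ[CC] H} (hsh : IsShuffle sh)

lemma fin2 (i : Fin 2) : i = 0 ∨ i = 1 := by omega

include hsh

lemma comm_wrd : ∀ n (x y : List (Fin 2)), x.length + y.length ≤ n →
    sh (wrd x) (wrd y) = sh (wrd y) (wrd x) := by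
  obtain ⟨h1, h2, h3, h4, h5⟩ := hsh
  intro n
  induction n with
  | zero =>
      rintro ⟨⟩ ⟨⟩ h
      · rfl
      · simp at h
      · simp at h
      · simp at h
  | succ n ih =>
      rintro (⟨⟩|⟨i,x⟩) (⟨⟩|⟨j,y⟩) h
      · rfl
      · simp [h1, h2]
      · simp [h1, h2]
      · rcases fin2 i with rfl | rfl <;> rcases fin2 j with rfl | rfl
        · rw [wrd_cons0, wrd_cons0, h3, h3]
          have e1 : sh (av * wrd x) (wrd y) = sh (wrd y) (av * wrd x) := by
            rw [← wrd_cons0]; apply ih; simp at h ⊢; omega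
          have e2 : sh (wrd x) (av * wrd y) = sh (av * wrd y) (wrd x) := by
            rw [← wrd_cons0]; apply ih; simp at h ⊢; omega
          have e3 : sh (wrd x) (wrd y) = sh (wrd y) (wrd x) := by
            apply ih; simp at h ⊢; omega
          rw [e1, e2, e3]
          congr 1
          abel
        · rw [wrd_cons0, wrd_cons1, h4, h5]
          have := ih (0::x) y (by simp at h ⊢; omega)
          rw [wrd_cons0] at this; rw [this]
        · rw [wrd_cons1, wrd_cons0, h4, h5]
          have := ih x (0::y) (by simp at h ⊢; omega)
          rw [wrd_cons0] at this; rw [this]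
        · rw [wrd_cons1, wrd_cons1, h4, h5, h4, h5]
          have := ih x y (by simp at h ⊢; omega)
          rw [this]

lemma sh_comm : ∀ u v : H, sh u v = sh v u := by
  have hw : ∀ (x : List (Fin 2)) (v : H), sh (wrd x) v = sh v (wrd x) := by
    intro x v
    refine Submodule.span_induction ?_ ?_ ?_ ?_ (wrd_span v)
    · rintro y ⟨ly, rfl⟩
      exact comm_wrd hsh (x.length + ly.length) x ly le_rfl
    · simp
    · intro a b _ _ ha hb; simp only [map_add, LinearMap.add_apply, ha, hb]
    · intro c a _ ha; simp only [map_smul, LinearMap.smul_apply, ha]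
  intro u v
  refine Submodule.span_induction ?_ ?_ ?_ ?_ (wrd_span u)
  · rintro x ⟨lx, rfl⟩; exact hw lx v
  · simp
  · intro a b _ _ ha hb; simp only [map_add, LinearMap.add_apply, ha, hb]
  · intro c a _ ha; simp only [map_smul, LinearMap.smul_apply, ha]

lemma assoc_wrd : ∀ n (x y z : List (Fin 2)),
    x.length + y.length + z.length ≤ n →
    sh (sh (wrd x) (wrd y)) (wrd z) = sh (wrd x) (sh (wrd y) (wrd z)) := by
  obtain ⟨h1, h2, h3, h4, h5⟩ := hsh
  intro n
  induction n with
  | zero =>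
      rintro ⟨⟩ ⟨⟩ ⟨⟩ h <;> simp_all [h1, h2]
  | succ n ih =>
      rintro (⟨⟩|⟨i,x⟩) y z h
      · simp [h1]
      rcases y with _ | ⟨j, y⟩
      · simp [h1, h2]
      rcases z with _ | ⟨k, z⟩
      · simp [h1, h2]
      -- all three nonempty
      rcases fin2 i with rfl | rfl
      · rcases fin2 j with rfl | rfl
        · rcases fin2 k with rfl | rfl
          · -- a a a case
            have hlen : x.length + y.length + z.length + 2 ≤ n := by
              simp at h; omega
            have ihh : ∀ u v w : List (Fin 2), u.length + v.length + w.length ≤ n →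
                sh (sh (wrd u) (wrd v)) (wrd w) = sh (wrd u) (sh (wrd v) (wrd w)) := ih
            have i1 := ihh (0::x) (0::y) z (by simp only [List.length_cons]; omega)
            have i2 := ihh (0::x) y (0::z) (by simp only [List.length_cons]; omega)
            have i3 := ihh x (0::y) (0::z) (by simp only [List.length_cons]; omega)
            have i4 := ihh x y (0::z) (by simp only [List.length_cons]; omega)
            have i5 := ihh (0::x) y z (by simp only [List.length_cons]; omega)
            have i6 := ihh x (0::y) z (by simp only [List.length_cons]; omega)
            have i7 := ihh x y z (by omega)
            simp only [wrd_cons0] at i1 i2 i3 i4 i5 i6 i7 ⊢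
            have e0 : sh (av * wrd x) (av * wrd y)
                = av * (sh (av * wrd x) (wrd y) + sh (wrd x) (av * wrd y)
                    + hb • sh (wrd x) (wrd y)) := h3 _ _
            have e0' : sh (av * wrd y) (av * wrd z)
                = av * (sh (av * wrd y) (wrd z) + sh (wrd y) (av * wrd z)
                    + hb • sh (wrd y) (wrd z)) := h3 _ _
            calc sh (sh (av * wrd x) (av * wrd y)) (av * wrd z)
                = av * (sh (sh (av * wrd x) (av * wrd y)) (wrd z)
                    + sh (sh (av * wrd x) (wrd y) + sh (wrd x) (av * wrd y)
                        + hb • sh (wrd x) (wrd y)) (av * wrd z)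
                    + hb • sh (sh (av * wrd x) (wrd y) + sh (wrd x) (av * wrd y)
                        + hb • sh (wrd x) (wrd y)) (wrd z)) := by
                  rw [e0, h3, ← e0]
              _ = av * (sh (av * wrd x) (sh (av * wrd y) (wrd z))
                    + (sh (av * wrd x) (sh (wrd y) (av * wrd z))
                      + sh (wrd x) (sh (av * wrd y) (av * wrd z))
                      + hb • sh (wrd x) (sh (wrd y) (av * wrd z)))
                    + hb • (sh (av * wrd x) (sh (wrd y) (wrd z))
                      + sh (wrd x) (sh (av * wrd y) (wrd z))
                      + hb • sh (wrd x) (sh (wrd y) (wrd z)))) := by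
                  simp only [map_add, LinearMap.add_apply, map_smul,
                    LinearMap.smul_apply, i1, i2, i3, i4, i5, i6, i7]
              _ = av * ((sh (av * wrd x) (sh (av * wrd y) (wrd z))
                      + sh (av * wrd x) (sh (wrd y) (av * wrd z))
                      + hb • sh (av * wrd x) (sh (wrd y) (wrd z)))
                    + sh (wrd x) (sh (av * wrd y) (av * wrd z))
                    + hb • (sh (wrd x) (sh (av * wrd y) (wrd z))
                      + sh (wrd x) (sh (wrd y) (av * wrd z))
                      + hb • sh (wrd x) (sh (wrd y) (wrd z)))) := by
                  congr 1
                  simp only [smul_add]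
                  abel
              _ = sh (av * wrd x) (sh (av * wrd y) (av * wrd z)) := by
                  rw [e0', h3, ← e0']
                  simp only [map_add, map_smul]
          · -- z head = b
            simp only [wrd_cons0, wrd_cons1]
            rw [h5, h5, h5]
            have := ih (0::x) (0::y) z (by simp at h ⊢; omega)
            rw [wrd_cons0, wrd_cons0] at this; rw [this]
        · -- y head = b
          simp only [wrd_cons0, wrd_cons1]
          rw [h5, h4, h4, h5]
          have := ih (0::x) y (k::z) (by simp at h ⊢; omega)
          rw [wrd_cons0] at this; rw [this]
      · -- x head = b
        simp only [wrd_cons1]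
        rw [h4, h4, h4]
        rw [ih x (j::y) (k::z) (by simp at h ⊢; omega)]

lemma sh_assoc : ∀ u v w : H, sh (sh u v) w = sh u (sh v w) := by
  have st1 : ∀ (x y z : List (Fin 2)),
      sh (sh (wrd x) (wrd y)) (wrd z) = sh (wrd x) (sh (wrd y) (wrd z)) :=
    fun x y z => assoc_wrd hsh _ x y z le_rfl
  have st2 : ∀ (x y : List (Fin 2)) (w : H),
      sh (sh (wrd x) (wrd y)) w = sh (wrd x) (sh (wrd y) w) := by
    intro x y w
    refine Submodule.span_induction ?_ ?_ ?_ ?_ (wrd_span w)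
    · rintro z ⟨lz, rfl⟩; exact st1 x y lz
    · simp
    · intro a b _ _ ha hb; simp only [map_add, ha, hb]
    · intro c a _ ha; simp only [map_smul, ha]
  have st3 : ∀ (x : List (Fin 2)) (v w : H),
      sh (sh (wrd x) v) w = sh (wrd x) (sh v w) := by
    intro x v w
    refine Submodule.span_induction ?_ ?_ ?_ ?_ (wrd_span v)
    · rintro y ⟨ly, rfl⟩; exact st2 x ly w
    · simp
    · intro a b _ _ ha hb
      simp only [map_add, LinearMap.add_apply, ha, hb]
    · intro c a _ ha
      simp only [map_smul, LinearMap.smul_apply, ha]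
  intro u v w
  refine Submodule.span_induction ?_ ?_ ?_ ?_ (wrd_span u)
  · rintro x ⟨lx, rfl⟩; exact st3 lx v w
  · simp
  · intro a b _ _ ha hb
    simp only [map_add, LinearMap.add_apply, ha, hb]
  · intro c a _ ha
    simp only [map_smul, LinearMap.smul_apply, ha]

-- Part 2: the key combinatorial identity
def eP (m : ℕ) : H := (av * bv) ^ m

omit hsh in
lemma eP_succ (m : ℕ) : eP (m+1) = av * (bv * eP m) := by
  simp only [eP, pow_succ', mul_assoc]

lemma shb_right (j : ℕ) (w : H) : sh w (bv ^ j) = bv ^ j * w := by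
  obtain ⟨h1, h2, h3, h4, h5⟩ := hsh
  induction j with
  | zero => simp [h2]
  | succ j ih => rw [pow_succ', h5, ih, ← mul_assoc]

lemma U_zero (k : ℕ) : sh (eP 0) (av * bv ^ (k+1)) = av * bv ^ (k+1) := by
  have : eP 0 = 1 := by simp [eP]
  rw [this]; exact hsh.1 _

lemma U_succ (m k : ℕ) : sh (eP (m+1)) (av * bv ^ (k+1)) =
    (av * bv ^ (k+1)) * eP (m+1) + (av * bv) * sh (eP m) (av * bv ^ (k+1))
      + hb • ((av * bv ^ (k+2)) * eP m) := by
  have h3 := hsh.2.2.1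
  have h4 := hsh.2.2.2.1
  rw [eP_succ, h3, shb_right hsh, h4, shb_right hsh, ← eP_succ]
  rw [mul_add, mul_add, mul_smul_comm]
  congr 1
  · congr 1
    · rw [mul_assoc]
    · rw [mul_assoc]
  · congr 1
    rw [← mul_assoc, ← mul_assoc, mul_assoc av (bv^(k+1)) bv, ← pow_succ]
def Tm (c m : ℕ) : H := ∑ i ∈ Finset.range m, eP i * (av * bv ^ c) * eP (m - 1 - i)

omit hsh in
lemma Tm_zero (c : ℕ) : Tm c 0 = 0 := by simp [Tm]

omit hsh in
lemma Tm_succ (c m : ℕ) :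
    Tm c (m+1) = (av * bv) * Tm c m + (av * bv ^ c) * eP m := by
  rw [Tm, Finset.sum_range_succ', Tm, Finset.mul_sum]
  congr 1
  · apply Finset.sum_congr rfl
    intro i _
    have e1 : eP (i+1) = (av * bv) * eP i := by simp only [eP, pow_succ']
    have e2 : m + 1 - 1 - (i+1) = m - 1 - i := by omega
    rw [e1, e2]
    simp only [mul_assoc]
  · simp only [eP, pow_zero, one_mul, Nat.sub_zero, Nat.add_sub_cancel]

lemma U_closed (m k : ℕ) : sh (eP m) (av * bv ^ (k+1)) =
    Tm (k+1) (m+1) + hb • Tm (k+2) m := by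
  induction m with
  | zero =>
      rw [U_zero hsh, Tm_zero, smul_zero, add_zero, Tm_succ, Tm_zero, mul_zero,
        zero_add, eP, pow_zero, mul_one]
  | succ m ih =>
      rw [U_succ hsh, ih, Tm_succ (k+1) (m+1), Tm_succ (k+2) m]
      rw [mul_add, mul_smul_comm, smul_add]
      abel

lemma key_sum (N : ℕ) :
    ∑ q ∈ Finset.range (N+1), ((-hb) ^ q) • sh (eP (N - q)) (av * bv ^ (q+1))
      = (N+1) • eP (N+1) := by
  set f : ℕ → H := fun q => ((-hb) ^ q) • Tm (q+1) (N+1-q) with hf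
  have step : ∀ q ∈ Finset.range (N+1),
      ((-hb) ^ q) • sh (eP (N - q)) (av * bv ^ (q+1)) = f q - f (q+1) := by
    intro q hq
    simp only [Finset.mem_range] at hq
    simp only [hf]
    rw [U_closed hsh, smul_add, sub_eq_add_neg]
    congr 1
    · have hnn : N - q + 1 = N + 1 - q := by omega
      rw [hnn]
    · rw [pow_succ, mul_smul, neg_smul, smul_neg, neg_neg]
      have e3 : q + 1 + 1 = q + 2 := by omega
      have e4 : N + 1 - (q + 1) = N - q := by omega
      rw [e3, e4]
  rw [Finset.sum_congr rfl step, Finset.sum_range_sub' f (N+1)]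
  have h2 : f (N+1) = 0 := by
    simp only [hf]
    have : N + 1 - (N + 1) = 0 := by omega
    rw [this, Tm_zero, smul_zero]
  rw [h2, sub_zero]
  simp only [hf, pow_zero, one_smul, Nat.sub_zero]
  rw [Tm]
  have hterm : ∀ i ∈ Finset.range (N+1),
      eP i * (av * bv ^ 1) * eP (N + 1 - 1 - i) = eP (N+1) := by
    intro i hi
    simp only [Finset.mem_range] at hi
    simp only [pow_one, eP]
    rw [← pow_succ, ← pow_add]
    congr 1
    omega
  rw [Finset.sum_congr rfl hterm, Finset.sum_const, Finset.card_range]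


end QSh

namespace QSh
open PowerSeries

def cq (n : ℕ) : CC := qs ((-1 : ℚ) ^ (n - 1) / (n : ℚ))

lemma cq_cast (n : ℕ) (hn : 1 ≤ n) : ((n : ℕ) : CC) * cq n = (-1 : CC) ^ (n-1) := by
  have : ((n : ℕ) : CC) = qs ((n : ℕ) : ℚ) := by
    simp [qs, map_natCast]
  rw [this, cq, qs, qs, ← map_mul]
  have hq : ((n : ℕ) : ℚ) * ((-1 : ℚ) ^ (n - 1) / (n : ℚ)) = (-1 : ℚ) ^ (n-1) := by
    have : ((n:ℕ) : ℚ) ≠ 0 := by positivity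
    field_simp
  rw [hq, map_pow, map_neg, map_one]

section Core
variable {R : Type} [CommRing R] [Module CC R]

lemma coeff_pow_zero (f : R⟦X⟧) (hf : constantCoeff (R := R) f = 0) :
    ∀ (n N : ℕ), N < n → coeff (R := R) N (f ^ n) = 0 := by
  intro n N h
  have hdvd : (X : R⟦X⟧) ^ n ∣ f ^ n :=
    pow_dvd_pow_of_dvd (X_dvd_iff.mpr hf) n
  exact (X_pow_dvd_iff.mp hdvd) N h

lemma coeff_mul_pow_zero (f g : R⟦X⟧) (hf : constantCoeff (R := R) f = 0) (N : ℕ) :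
    coeff (R := R) N (f ^ (N+1) * g) = 0 := by
  rw [coeff_mul]
  apply Finset.sum_eq_zero
  rintro ⟨p, q⟩ hpq
  rw [Finset.HasAntidiagonal.mem_antidiagonal] at hpq
  have : coeff (R := R) p (f ^ (N+1)) = 0 := coeff_pow_zero f hf _ _ (by omega)
  rw [this, zero_mul]

variable (hsm : ∀ (a : CC) (x y : R), (a • x) * y = a • (x * y))

include hsm

lemma hsm' (a : CC) (x y : R) : x * (a • y) = a • (x * y) := by
  rw [mul_comm, hsm, mul_comm]

omit hsm

variable (hsmS : ∀ (a : CC) (x y : R⟦X⟧), (a • x) * y = a • (x * y))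

lemma logDeriv (hsm : ∀ (a : CC) (x y : R), (a • x) * y = a • (x * y))
    (f : R⟦X⟧) (hf : constantCoeff (R := R) f = 0) :
    (1 + f) * (d⁄dX R) (PowerSeries.mk fun N =>
        ∑ n ∈ Finset.Icc 1 N, cq n • coeff (R := R) N (f ^ n)) = (d⁄dX R) f := by
  ext N
  set L : R⟦X⟧ := PowerSeries.mk fun N => ∑ n ∈ Finset.Icc 1 N, cq n • coeff (R := R) N (f ^ n) with hL
  rw [coeff_mul]
  have hdl : ∀ q ∈ Finset.range (N+1),
      coeff (R := R) q ((d⁄dX R) L) = ∑ n ∈ Finset.Icc 1 (N+1), cq n • coeff (R := R) q ((d⁄dX R) (f ^ n)) := by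
    intro q hq
    rw [Finset.mem_range] at hq
    rw [coeff_derivative, hL, coeff_mk]
    have hsub : Finset.Icc 1 (q+1) ⊆ Finset.Icc 1 (N+1) := by
      apply Finset.Icc_subset_Icc le_rfl; omega
    rw [Finset.sum_subset hsub (fun n hn hn2 => by
      rw [Finset.mem_Icc] at hn
      rw [Finset.mem_Icc] at hn2
      have : coeff (R := R) (q+1) (f ^ n) = 0 := coeff_pow_zero f hf n (q+1) (by omega)
      rw [this, smul_zero])]
    rw [Finset.sum_mul]
    apply Finset.sum_congr rfl
    intro n _
    rw [hsm, ← coeff_derivative]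
  have step1 : ∀ p ∈ Finset.HasAntidiagonal.antidiagonal N,
      coeff (R := R) p.1 (1 + f) * coeff (R := R) p.2 ((d⁄dX R) L)
        = ∑ n ∈ Finset.Icc 1 (N+1), cq n •
            (coeff (R := R) p.1 (1 + f) * coeff (R := R) p.2 ((d⁄dX R) (f ^ n))) := by
    intro p hp
    rw [Finset.HasAntidiagonal.mem_antidiagonal] at hp
    rw [hdl p.2 (by rw [Finset.mem_range]; omega), Finset.mul_sum]
    apply Finset.sum_congr rfl
    intro n _
    rw [hsm' hsm]
  rw [Finset.sum_congr rfl step1, Finset.sum_comm]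
  have step2 : ∀ n ∈ Finset.Icc 1 (N+1),
      (∑ p ∈ Finset.HasAntidiagonal.antidiagonal N, cq n •
        (coeff (R := R) p.1 (1 + f) * coeff (R := R) p.2 ((d⁄dX R) (f ^ n))))
      = ((-1 : CC) ^ (n-1)) • (coeff (R := R) N (f ^ (n-1) * (d⁄dX R) f)
          + coeff (R := R) N (f ^ n * (d⁄dX R) f)) := by
    intro n hn
    rw [Finset.mem_Icc] at hn
    rw [← Finset.smul_sum, ← coeff_mul]
    obtain ⟨m, rfl⟩ : ∃ m, n = m + 1 := ⟨n - 1, by omega⟩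
    have hlp : (d⁄dX R) (f ^ (m+1)) = (m+1) • ((f ^ m) * (d⁄dX R) f) := by
      have := Derivation.leibniz_pow (d⁄dX R) (a := f) (m+1)
      rw [this, Nat.add_sub_cancel, smul_eq_mul]
    rw [hlp, mul_smul_comm, map_nsmul, ← Nat.cast_smul_eq_nsmul CC, ← mul_smul,
      mul_comm (cq (m+1)), cq_cast (m+1) (by omega)]
    simp only [Nat.add_sub_cancel]
    congr 1
    rw [one_add_mul, map_add, ← mul_assoc, ← pow_succ']
  rw [Finset.sum_congr rfl step2]
  have hre : ∀ k ∈ Finset.range (N+1),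
      (fun n => ((-1 : CC) ^ (n-1)) • (coeff (R := R) N (f ^ (n-1) * (d⁄dX R) f)
          + coeff (R := R) N (f ^ n * (d⁄dX R) f))) (1 + k)
      = ((-1 : CC) ^ k) • coeff (R := R) N (f ^ k * (d⁄dX R) f)
        - ((-1 : CC) ^ (k+1)) • coeff (R := R) N (f ^ (k+1) * (d⁄dX R) f) := by
    intro k _
    have h1k : 1 + k = k + 1 := Nat.add_comm 1 k
    rw [h1k]
    simp only [Nat.add_sub_cancel, smul_add]
    rw [sub_eq_add_neg]
    congr 1
    rw [pow_succ (-1:CC) k, mul_comm ((-1:CC)^k) (-1:CC), mul_smul, neg_smul, one_smul, neg_neg]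
  rw [← Finset.Ico_add_one_right_eq_Icc, Finset.sum_Ico_eq_sum_range]
  simp only [show N + 1 + 1 - 1 = N + 1 from rfl]
  rw [Finset.sum_congr rfl hre, Finset.sum_range_sub']
  rw [coeff_mul_pow_zero f ((d⁄dX R) f) hf N, smul_zero, sub_zero, pow_zero, one_smul,
    pow_zero, one_mul]

lemma derivUnique
    (hdiv : ∀ (n : ℕ) (x : R), (n+1) • x = 0 → x = 0)
    (f g₁ g₂ : R⟦X⟧) (hf : constantCoeff (R := R) f = 0)
    (h0 : coeff (R := R) 0 g₁ = coeff (R := R) 0 g₂)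
    (h : (1 + f) * (d⁄dX R) g₁ = (1 + f) * (d⁄dX R) g₂) : g₁ = g₂ := by
  have main : ∀ N, ∀ j ≤ N, coeff (R := R) j g₁ = coeff (R := R) j g₂ := by
    intro N
    induction N with
    | zero =>
        intro j hj
        have hj0 : j = 0 := by omega
        subst hj0; exact h0
    | succ N ih =>
        intro j hj
        rcases Nat.lt_or_ge j (N+1) with hlt | hge
        · exact ih j (by omega)
        · have hj' : j = N + 1 := by omega
          subst hj'
          have hco := congrArg (fun F => coeff (R := R) N F) h
          simp only [coeff_mul] at hco
          have hsplit : ∀ g : R⟦X⟧,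
              (∑ p ∈ Finset.HasAntidiagonal.antidiagonal N, coeff (R := R) p.1 (1 + f) * coeff (R := R) p.2 ((d⁄dX R) g))
              = coeff (R := R) N ((d⁄dX R) g)
                + ∑ p ∈ Finset.HasAntidiagonal.antidiagonal N,
                    coeff (R := R) p.1 f * coeff (R := R) p.2 ((d⁄dX R) g) := by
            intro g
            have : ∀ p ∈ Finset.HasAntidiagonal.antidiagonal N,
                coeff (R := R) p.1 (1 + f) * coeff (R := R) p.2 ((d⁄dX R) g)
                = (coeff (R := R) p.1 1) * coeff (R := R) p.2 ((d⁄dX R) g)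
                  + coeff (R := R) p.1 f * coeff (R := R) p.2 ((d⁄dX R) g) := by
              intro p _; rw [map_add, add_mul]
            rw [Finset.sum_congr rfl this, Finset.sum_add_distrib]
            congr 1
            rw [Finset.sum_eq_single (0, N)]
            · rw [coeff_one, if_pos rfl, one_mul]
            · rintro ⟨p, q⟩ hpq hne
              rw [Finset.HasAntidiagonal.mem_antidiagonal] at hpq
              have hp : p ≠ 0 := by
                intro hp0; apply hne; subst hp0; simp at hpq; subst hpq; rfl
              rw [coeff_one, if_neg hp, zero_mul]
            · intro hmem
              exact absurd (Finset.HasAntidiagonal.mem_antidiagonal.mpr (by omega)) hmem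
          rw [hsplit, hsplit] at hco
          have htail : ∑ p ∈ Finset.HasAntidiagonal.antidiagonal N, coeff (R := R) p.1 f * coeff (R := R) p.2 ((d⁄dX R) g₁)
              = ∑ p ∈ Finset.HasAntidiagonal.antidiagonal N, coeff (R := R) p.1 f * coeff (R := R) p.2 ((d⁄dX R) g₂) := by
            apply Finset.sum_congr rfl
            rintro ⟨p, q⟩ hpq
            rw [Finset.HasAntidiagonal.mem_antidiagonal] at hpq
            rcases Nat.eq_zero_or_pos p with hp0 | hppos
            · subst hp0
              have hf0 : coeff (R := R) 0 f = 0 := by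
                rw [coeff_zero_eq_constantCoeff]; exact hf
              rw [hf0, zero_mul, zero_mul]
            · congr 1
              rw [coeff_derivative, coeff_derivative, ih (q+1) (by omega)]
          rw [htail] at hco
          have hder : coeff (R := R) N ((d⁄dX R) g₁) = coeff (R := R) N ((d⁄dX R) g₂) :=
            add_right_cancel hco
          rw [coeff_derivative, coeff_derivative] at hder
          have hz : (N+1) • (coeff (R := R) (N+1) g₁ - coeff (R := R) (N+1) g₂) = 0 := by
            rw [nsmul_eq_mul, mul_sub, mul_comm, mul_comm ((N+1 : ℕ) : R)]
            push_cast at hder ⊢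
            rw [hder, sub_self]
          have := hdiv N _ hz
          exact sub_eq_zero.mp this
  ext N
  exact main N N le_rfl


end Core

section Ring


def HS : Type := H
instance : AddCommGroup HS := inferInstanceAs (AddCommGroup H)
instance : Module CC HS := inferInstanceAs (Module CC H)

@[reducible] def shRing (sh : H →ₗ[CC] H →ₗ[CC] H) (hsh : IsShuffle sh)
    (hcomm : ∀ u v, sh u v = sh v u)
    (hassoc : ∀ u v w, sh (sh u v) w = sh u (sh v w)) :
    CommRing HS :=
  { (inferInstance : AddCommGroup HS) with
    mul := fun x y => sh x y
    one := (1 : H)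
    mul_assoc := hassoc
    one_mul := hsh.1
    mul_one := hsh.2.1
    left_distrib := fun a b c => map_add (sh a) b c
    right_distrib := fun a b c => by
      show sh (a + b) c = sh a c + sh b c
      exact LinearMap.map_add₂ sh a b c
    zero_mul := fun a => by show sh 0 a = 0; rw [map_zero]; rfl
    mul_zero := fun a => map_zero (sh a)
    mul_comm := hcomm }

end Ring

end QSh

/-- `ψ(X) = log_{⧢_q}(1/(1 − e_{1̄}X))` in `H[[X]]`. -/
theorem psi_eq_shuffle_log (sh : H →ₗ[CC] H →ₗ[CC] H) (hsh : IsShuffle sh) :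
    psiS = serlog sh (geom - 1) := by
  classical
  have hcomm := QSh.sh_comm hsh
  have hassoc := QSh.sh_assoc hsh
  letI : CommRing QSh.HS := QSh.shRing sh hsh hcomm hassoc
  have hmul : ∀ x y : QSh.HS, x * y = sh x y := fun _ _ => rfl
  have hsm : ∀ (a : CC) (x y : QSh.HS), (a • x) * y = a • (x * y) := by
    intro a x y
    rw [hmul, hmul]; exact LinearMap.map_smul₂ sh a x y
  have hdiv : ∀ (n : ℕ) (x : QSh.HS), (n+1) • x = 0 → x = 0 := by
    intro n x hx
    rw [← Nat.cast_smul_eq_nsmul CC] at hx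
    have hone : qs (1 / ((n:ℚ)+1)) * ((n+1 : ℕ) : CC) = 1 := by
      rw [show (((n+1:ℕ)) : CC) = qs ((n+1:ℕ):ℚ) by simp [qs], qs, qs, ← map_mul]
      rw [show (1 / ((n:ℚ)+1)) * ((n+1:ℕ):ℚ) = 1 by
        push_cast
        have h0 : (n:ℚ) + 1 ≠ 0 := by positivity
        field_simp]
      exact map_one _
    calc x = (qs (1 / ((n:ℚ)+1)) * ((n+1 : ℕ) : CC)) • x := by rw [hone, one_smul]
    _ = qs (1 / ((n:ℚ)+1)) • (((n+1 : ℕ) : CC) • x) := by rw [mul_smul]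
    _ = 0 := by rw [hx, smul_zero]
  -- the two relevant series in the HS world
  set fS : PowerSeries QSh.HS :=
    PowerSeries.mk (fun N => if N = 0 then 0 else QSh.eP N) with hfS
  set gS : PowerSeries QSh.HS := PowerSeries.mk (fun n =>
    if n = 0 then 0 else (qs ((-1 : ℚ) ^ (n - 1) / (n : ℚ)) * hb ^ (n - 1)) • (av * bv ^ n))
    with hgS
  set LS : PowerSeries QSh.HS := PowerSeries.mk (fun N =>
    ∑ n ∈ Finset.Icc 1 N, QSh.cq n • PowerSeries.coeff (R := QSh.HS) N (fS ^ n)) with hLS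
  have hfconst : PowerSeries.constantCoeff (R := QSh.HS) fS = 0 := by
    rw [hfS, ← PowerSeries.coeff_zero_eq_constantCoeff, PowerSeries.coeff_mk]; simp only [↓reduceIte]
  have h1f : ∀ p, PowerSeries.coeff (R := QSh.HS) p (1 + fS) = QSh.eP p := by
    intro p
    rw [map_add, PowerSeries.coeff_one, hfS, PowerSeries.coeff_mk]
    rcases Nat.eq_zero_or_pos p with rfl | hp
    · simp only [↓reduceIte, add_zero]
      show (1 : H) = QSh.eP 0
      rw [QSh.eP, pow_zero]
    · simp only [show p ≠ 0 by omega, ↓reduceIte, zero_add]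
      exact zero_add _
  have hdg : ∀ q : ℕ, PowerSeries.coeff (R := QSh.HS) q (PowerSeries.derivative QSh.HS gS)
      = ((-hb) ^ q) • (av * bv ^ (q+1)) := by
    intro q
    rw [PowerSeries.coeff_derivative, hgS, PowerSeries.coeff_mk]; simp only [show q + 1 ≠ 0 by omega, ↓reduceIte]
    simp only [Nat.add_sub_cancel]
    have hcm : ∀ (z : QSh.HS) (n : ℕ), z * ((n : QSh.HS) + 1) = ((n+1 : ℕ) : CC) • z := by
      intro z n
      rw [mul_comm, show ((n : QSh.HS) + 1) = ((n+1 : ℕ) : QSh.HS) by push_cast; ring,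
        ← nsmul_eq_mul, ← Nat.cast_smul_eq_nsmul CC]
    have h3 : qs ((-1 : ℚ) ^ q / ((q+1 : ℕ) : ℚ)) = QSh.cq (q+1) := by
      rw [QSh.cq, Nat.add_sub_cancel]
    have h2 : ((q+1:ℕ) : CC) * QSh.cq (q+1) = (-1 : CC) ^ q := by
      have hh := QSh.cq_cast (q+1) (by omega)
      rwa [Nat.add_sub_cancel] at hh
    refine (hcm _ q).trans ((smul_smul _ _ _).trans (congrArg (fun c : CC => c • (av * bv ^ (q+1))) ?_))
    rw [h3, ← mul_assoc, h2, ← neg_pow]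
  have hkey : (1 + fS) * (PowerSeries.derivative QSh.HS) gS
      = (PowerSeries.derivative QSh.HS) fS := by
    ext N
    rw [PowerSeries.coeff_mul, Finset.Nat.sum_antidiagonal_eq_sum_range_succ_mk]
    have hterm : ∀ k ∈ Finset.range (N+1),
        PowerSeries.coeff (R := QSh.HS) k (1 + fS)
          * PowerSeries.coeff (R := QSh.HS) (N-k) ((PowerSeries.derivative QSh.HS) gS)
        = ((-hb) ^ (N-k)) • sh (QSh.eP k) (av * bv ^ (N-k+1)) := by
      intro k _
      rw [h1f, hdg]; exact (hmul _ _).trans (map_smul _ _ _)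
    rw [Finset.sum_congr rfl hterm]
    have hrefl := Finset.sum_range_reflect
      (fun q => ((-hb) ^ q) • sh (QSh.eP (N - q)) (av * bv ^ (q+1))) (N+1)
    have hcongr : ∀ k ∈ Finset.range (N+1),
        (fun q => ((-hb) ^ q) • sh (QSh.eP (N - q)) (av * bv ^ (q+1))) (N + 1 - 1 - k)
        = ((-hb) ^ (N-k)) • sh (QSh.eP k) (av * bv ^ (N-k+1)) := by
      intro k hk
      rw [Finset.mem_range] at hk
      have e1 : N + 1 - 1 - k = N - k := by omega
      have e2 : N - (N - k) = k := by omega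
      simp only [e1, e2]
    refine (Finset.sum_congr rfl hcongr).symm.trans ?_; rw [hrefl, QSh.key_sum hsh N]
    rw [PowerSeries.coeff_derivative, hfS, PowerSeries.coeff_mk]; simp only [show N + 1 ≠ 0 by omega, ↓reduceIte]
    symm
    exact (mul_comm _ _).trans ((congrArg (· * _) (show ((N : QSh.HS) + 1) = ((N+1 : ℕ) : QSh.HS) by push_cast; ring)).trans (nsmul_eq_mul _ _).symm)
  have hlog := QSh.logDeriv hsm fS hfconst
  have hgL : gS = LS := by
    apply QSh.derivUnique hdiv fS gS LS hfconst
    · rw [hgS, hLS, PowerSeries.coeff_mk, PowerSeries.coeff_mk]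
      simp
    · rw [hkey]
      rw [← hLS] at hlog
      exact hlog.symm
  -- transfer itpow to powers of fS
  have hgeom : ∀ N, PowerSeries.coeff (R := H) N (geom - 1) = PowerSeries.coeff (R := QSh.HS) N fS := by
    intro N
    rw [map_sub, PowerSeries.coeff_one, hfS, PowerSeries.coeff_mk]
    simp only [geom, PowerSeries.coeff_mk]
    rcases Nat.eq_zero_or_pos N with rfl | hN
    · show (av*bv)^0 - (if (0:ℕ) = 0 then (1:H) else 0) = (if (0:ℕ) = 0 then (0:H) else QSh.eP 0)
      rw [if_pos rfl, if_pos rfl, pow_zero, sub_self]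
    · show (av*bv)^N - (if N = 0 then (1:H) else 0) = (if N = 0 then (0:H) else QSh.eP N)
      rw [if_neg (by omega), if_neg (by omega), sub_zero]
      rfl
  have hit : ∀ n N, PowerSeries.coeff (R := H) N (itpow sh (geom - 1) n)
      = PowerSeries.coeff (R := QSh.HS) N (fS ^ n) := by
    intro n
    induction n with
    | zero =>
        intro N
        rw [pow_zero]
        show PowerSeries.coeff (R := H) N 1 = PowerSeries.coeff (R := QSh.HS) N 1
        rw [PowerSeries.coeff_one, PowerSeries.coeff_one]
        rfl
    | succ n ih =>
        cases n with
        | zero =>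
            intro N
            rw [pow_one]
            exact hgeom N
        | succ m =>
            intro N
            rw [show itpow sh (geom - 1) (m+1+1)
              = extMul sh (geom - 1) (itpow sh (geom - 1) (m+1)) from rfl]
            rw [extMul, PowerSeries.coeff_mk, pow_succ', PowerSeries.coeff_mul]
            apply Finset.sum_congr rfl
            rintro ⟨p, q⟩ _
            rw [hmul, ← hgeom p, ← ih q]
  -- conclude
  apply PowerSeries.ext
  intro N
  have lhs : PowerSeries.coeff (R := H) N psiS = PowerSeries.coeff (R := QSh.HS) N gS := by
    simp only [psiS, PowerSeries.coeff_mk, hgS]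
    rfl
  have rhs : PowerSeries.coeff (R := H) N (serlog sh (geom - 1))
      = PowerSeries.coeff (R := QSh.HS) N LS := by
    simp only [serlog, PowerSeries.coeff_mk, hLS]
    apply Finset.sum_congr rfl
    intro n _
    rw [hit n N]
    rfl
  rw [lhs, rhs, hgL]

end
end
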